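/- arXiv:2303.12565 — 2 statements merged into one kernel-verified Lean document; each statement's English description precedes it below -/
import Mathlib

section
/- Let M be a virtual model and let α ∈ e_{M̂}. Suppose that the set M ∩ [α,∞) of ordinals of M that are ≥ α is nonempty, and let β be its minimum. Then β ∈ e_M. -/
set_option autoImplicit false

open FirstOrder FirstOrder.Language

namespace VMF

/-- Von Neumann natural numbers as `ZFSet`s. -/
def vN : ℕ → ZFSet.{0}
  | 0 => ∅
  | n + 1 => insert (vN n) (vN n)

/-- A class of sets is transitive. -/
def TransClass (S : Set ZFSet.{0}) : Prop := ∀ ⦃x⦄, x ∈ S → ∀ ⦃y⦄, y ∈ x → y ∈ S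

/-- The transitive closure of a class: the least transitive class containing it. -/
def trclSet (S : Set ZFSet.{0}) : Set ZFSet.{0} :=
  {x | ∀ T : Set ZFSet.{0}, S ⊆ T → TransClass T → x ∈ T}

/-- The class of all sets of rank `< α` (the `α`-th level of the cumulative hierarchy). -/
def Vclass (α : Ordinal.{0}) : Set ZFSet.{0} := {x | ZFSet.rank x < α}

/-- `f` is (extensionally) a function, as a set of Kuratowski pairs. -/
def IsZFun (f : ZFSet.{0}) : Prop :=
  (∀ p ∈ f.toSet, ∃ a b : ZFSet.{0}, p = a.pair b) ∧
    ∀ a b c : ZFSet.{0}, a.pair b ∈ f → a.pair c ∈ f → b = c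

/-- `t` is a finite tuple (a function whose domain is a von Neumann natural number)
with all values in the class `X`. -/
def IsTupleFrom (X : Set ZFSet.{0}) (t : ZFSet.{0}) : Prop :=
  ∃ n : ℕ, (∀ u ∈ t.toSet, ∃ i z : ZFSet.{0}, u = i.pair z ∧ i ∈ vN n ∧ z ∈ X) ∧
    ∀ i : ZFSet.{0}, i ∈ vN n → ∃ z : ZFSet.{0}, i.pair z ∈ t

/-- `Hull(M, X)`: the class of all values `f(x)` where `f ∈ M` is a function and
`x ∈ X^{<ω} ∩ dom f` is a finite tuple from `X`. -/
def HullSet (M : Set ZFSet.{0}) (X : Set ZFSet.{0}) : Set ZFSet.{0} :=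
  {z | ∃ f ∈ M, IsZFun f ∧ ∃ t : ZFSet.{0}, IsTupleFrom X t ∧ t.pair z ∈ f}

/-- The Mostowski collapse map of a class `S`:
`collapse S x = { collapse S y | y ∈ x ∩ S }`. -/
noncomputable def collapse (S : Set ZFSet.{0}) : ZFSet.{0} → ZFSet.{0} :=
  ZFSet.mem_wf.fix fun x ih =>
    let g : ZFSet.{0} → ZFSet.{0} := fun y =>
      @dite _ (y ∈ x) (Classical.dec _) (fun h => ih y h) (fun _ => ∅)
    letI : ZFSet.Definable₁ g := Classical.allZFSetDefinable _
    ZFSet.image g (ZFSet.sep (· ∈ S) x)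

variable (L : FirstOrder.Language)

/-- An `L`-structure whose universe is a class of `ZFSet`s (with `L` relational;
function symbols are treated as relation symbols). -/
structure VModel where
  carrier : Set ZFSet.{0}
  rel : ∀ ⦃n : ℕ⦄, L.Relations n → (Fin n → ZFSet.{0}) → Prop
  rel_dom : ∀ ⦃n : ℕ⦄ (r : L.Relations n) (v : Fin n → ZFSet.{0}),
    rel r v → ∀ i, v i ∈ carrier

variable {L}
variable [L.IsRelational]

/-- Interpretation of a term of a relational language under an assignment. -/
def interpTerm {n : ℕ} (v : Fin n → ZFSet.{0}) : L.Term (Empty ⊕ Fin n) → ZFSet.{0}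
  | .var (Sum.inr i) => v i
  | .var (Sum.inl e) => e.elim
  | .func f _ => isEmptyElim f

/-- Tarski satisfaction for a `VModel`; quantifiers range over the carrier. -/
def VModel.BRealize (M : VModel L) :
    ∀ {n : ℕ}, L.BoundedFormula Empty n → (Fin n → ZFSet.{0}) → Prop
  | _, .falsum, _ => False
  | _, .equal t u, v => interpTerm v t = interpTerm v u
  | _, .rel R ts, v => M.rel R fun i => interpTerm v (ts i)
  | _, .imp φ ψ, v => M.BRealize φ v → M.BRealize ψ v
  | _, .all φ, v => ∀ x ∈ M.carrier, M.BRealize φ (Fin.snoc v x)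

/-- `M` is an elementary substructure of `N` (in particular `M` carries the
structure inherited from `N`). -/
def ElemSub (M N : VModel L) : Prop :=
  M.carrier ⊆ N.carrier ∧
  (∀ ⦃n : ℕ⦄ (r : L.Relations n) (v : Fin n → ZFSet.{0}),
      (∀ i, v i ∈ M.carrier) → (M.rel r v ↔ N.rel r v)) ∧
  ∀ ⦃n : ℕ⦄ (φ : L.BoundedFormula Empty n) (v : Fin n → ZFSet.{0}),
    (∀ i, v i ∈ M.carrier) → (M.BRealize φ v ↔ N.BRealize φ v)

variable (memRel : L.Relations 2)

/-- The distinguished membership symbol is interpreted as true membership. -/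
def MemCorrect (M : VModel L) : Prop :=
  ∀ x y : ZFSet.{0}, x ∈ M.carrier → y ∈ M.carrier → (M.rel memRel ![x, y] ↔ x ∈ y)

/-- Semantic satisfaction of `ZFC⁻` (`ZFC` minus the power set axiom), with the
separation and replacement schemes taken for all formulas of the extended language `L`. -/
def IsZFCminus (M : VModel L) : Prop :=
  -- extensionality
  (∀ x ∈ M.carrier, ∀ y ∈ M.carrier, (∀ z : ZFSet.{0}, z ∈ x ↔ z ∈ y) → x = y) ∧
  -- pairing
  (∀ x ∈ M.carrier, ∀ y ∈ M.carrier, ({x, y} : ZFSet.{0}) ∈ M.carrier) ∧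
  -- union
  (∀ x ∈ M.carrier, ZFSet.sUnion x ∈ M.carrier) ∧
  -- infinity
  ZFSet.omega ∈ M.carrier ∧
  -- foundation
  (∀ x ∈ M.carrier, x ≠ ∅ → ∃ y ∈ x.toSet, ∀ z ∈ y.toSet, z ∉ x) ∧
  -- separation scheme
  (∀ (n : ℕ) (φ : L.BoundedFormula Empty (n + 1)) (p : Fin n → ZFSet.{0}),
    (∀ i, p i ∈ M.carrier) → ∀ a ∈ M.carrier,
      ZFSet.sep (fun x => M.BRealize φ (Fin.snoc p x)) a ∈ M.carrier) ∧
  -- replacement scheme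
  (∀ (n : ℕ) (φ : L.BoundedFormula Empty (n + 2)) (p : Fin n → ZFSet.{0}),
    (∀ i, p i ∈ M.carrier) → ∀ a ∈ M.carrier,
      (∀ x ∈ a.toSet, ∃! y, y ∈ M.carrier ∧ M.BRealize φ (Fin.snoc (Fin.snoc p x) y)) →
      ∃ b ∈ M.carrier, ∀ y : ZFSet.{0},
        y ∈ b ↔ ∃ x ∈ a.toSet, M.BRealize φ (Fin.snoc (Fin.snoc p x) y)) ∧
  -- choice
  (∀ a ∈ M.carrier, ∃ f ∈ M.carrier, IsZFun f ∧
    ∀ x : ZFSet.{0}, x ∈ a → x ≠ ∅ → ∃ y : ZFSet.{0}, y ∈ x ∧ x.pair y ∈ f)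

/-- An admissible structure: a transitive set structure satisfying `ZFC⁻`,
with `∈` interpreted as true membership. -/
def Admissible (M : VModel L) : Prop :=
  TransClass M.carrier ∧ (∃ a : ZFSet.{0}, M.carrier = a.toSet) ∧
    MemCorrect memRel M ∧ IsZFCminus M

/-- A virtual model: a structure elementary in some admissible structure. -/
def VirtualModel (M : VModel L) : Prop :=
  ∃ A : VModel L, Admissible memRel A ∧ ElemSub M A

/-- `H` is "the" structure `M̂` on the transitive closure of `M` with `M ≺ H`. -/
def IsHat (M H : VModel L) : Prop :=
  H.carrier = trclSet M.carrier ∧ ElemSub M H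

/-- The restriction (inherited structure) of `A` to the class `S`. -/
def restrictTo (A : VModel L) (S : Set ZFSet.{0}) : VModel L where
  carrier := S ∩ A.carrier
  rel := fun _ r v => A.rel r v ∧ ∀ i, v i ∈ S ∩ A.carrier
  rel_dom := by intro n r v h i; exact h.2 i

/-- `e_A`: the class of (von Neumann) ordinals `α` of `A` such that the restriction
of `A` to rank `< α` is an elementary substructure of `A`. -/
def eSet (A : VModel L) : Set ZFSet.{0} :=
  {a | a ∈ A.carrier ∧ a.IsOrdinal ∧ ElemSub (restrictTo A (Vclass (ZFSet.rank a))) A}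

/-- The `α`-reduction `M↓α`: the image of `M` under the transitive collapse of
`Hull(M, V_α)`, with the transported structure. -/
noncomputable def reduct (M : VModel L) (α : Ordinal.{0}) : VModel L where
  carrier := collapse (HullSet M.carrier (Vclass α)) '' M.carrier
  rel := fun _ r v => ∃ w : Fin _ → ZFSet.{0}, (∀ i, w i ∈ M.carrier) ∧
      (∀ i, collapse (HullSet M.carrier (Vclass α)) (w i) = v i) ∧ M.rel r w
  rel_dom := by
    intro n r v h i
    obtain ⟨w, hw, hc, -⟩ := h
    exact ⟨w i, hw i, hc i⟩

/-- `M` is `α`-generated: `M̂ = Hull(M, V_α)`. -/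
def AlphaGen (M : VModel L) (α : Ordinal.{0}) : Prop :=
  trclSet M.carrier = HullSet M.carrier (Vclass α)

/-- `f` is an isomorphism from `A` onto `B`. -/
def IsIsoOn (A B : VModel L) (f : ZFSet.{0} → ZFSet.{0}) : Prop :=
  Set.BijOn f A.carrier B.carrier ∧
  ∀ ⦃n : ℕ⦄ (r : L.Relations n) (v : Fin n → ZFSet.{0}), (∀ i, v i ∈ A.carrier) →
    (A.rel r v ↔ B.rel r fun i => f (v i))

/-- `M ≅_α N` (`HM`, `HN` being the hats of `M`, `N`): there is an isomorphism
`f : Hull(M, V_α) ≅ Hull(N, V_α)` with `f[M] = N`. -/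
def Cong (α : Ordinal.{0}) (M N HM HN : VModel L) : Prop :=
  ∃ f : ZFSet.{0} → ZFSet.{0},
    IsIsoOn (restrictTo HM (HullSet M.carrier (Vclass α)))
      (restrictTo HN (HullSet N.carrier (Vclass α))) f ∧
    f '' M.carrier = N.carrier

/-- The structure that an element `m` of (the hat) `H` inherits from `H`. -/
def subModel (H : VModel L) (m : ZFSet.{0}) : VModel L := restrictTo H m.toSet

/-- The hat of an element `m` of a transitive `H`: the inherited structure on `trcl(m)`. -/
def subHat (H : VModel L) (m : ZFSet.{0}) : VModel L := restrictTo H (trclSet m.toSet)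

/-- `M ◁_α N`: there is `M' ∈ N` which, with the inherited structure,
is a virtual model with `M ≅_α M'`. -/
def Lhd (α : Ordinal.{0}) (M N HM HN : VModel L) : Prop :=
  ∃ m : ZFSet.{0}, m ∈ N.carrier ∧ VirtualModel memRel (subModel HN m) ∧
    Cong α M (subModel HN m) HM (subHat HN m)

/-- `M` is `ξ`-strong (relative to its hat `H`): `V_ξ ⊆ M̂`. -/
def Strong (ξ : Ordinal.{0}) (H : VModel L) : Prop := Vclass ξ ⊆ H.carrier

/-- `Σ₀` (i.e. `Δ₀`) formulas: formulas all of whose quantifiers are bounded. -/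
inductive IsDelta0 {L : FirstOrder.Language} (memRel : L.Relations 2) :
    ∀ {n : ℕ}, L.BoundedFormula Empty n → Prop
  | falsum {n : ℕ} : IsDelta0 memRel (.falsum : L.BoundedFormula Empty n)
  | equal {n : ℕ} (t u : L.Term (Empty ⊕ Fin n)) : IsDelta0 memRel (.equal t u)
  | rel {n l : ℕ} (R : L.Relations l) (ts : Fin l → L.Term (Empty ⊕ Fin n)) :
      IsDelta0 memRel (.rel R ts)
  | imp {n : ℕ} {φ ψ : L.BoundedFormula Empty n} :
      IsDelta0 memRel φ → IsDelta0 memRel ψ → IsDelta0 memRel (φ.imp ψ)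
  | bforall {n : ℕ} (k : Fin n) {φ : L.BoundedFormula Empty (n + 1)} :
      IsDelta0 memRel φ →
      IsDelta0 memRel
        ((BoundedFormula.rel memRel
            ![Term.var (Sum.inr (Fin.last n)), Term.var (Sum.inr k.castSucc)]).imp φ).all

/-- `Σ₀`-elementary substructure (with the inherited structure). -/
def Delta0ElemSub (M N : VModel L) : Prop :=
  M.carrier ⊆ N.carrier ∧
  (∀ ⦃n : ℕ⦄ (r : L.Relations n) (v : Fin n → ZFSet.{0}),
      (∀ i, v i ∈ M.carrier) → (M.rel r v ↔ N.rel r v)) ∧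
  ∀ ⦃n : ℕ⦄ (φ : L.BoundedFormula Empty n), IsDelta0 memRel φ →
    ∀ v : Fin n → ZFSet.{0}, (∀ i, v i ∈ M.carrier) →
      (M.BRealize φ v ↔ N.BRealize φ v)


/-! ## Auxiliary development -/

open ZFSet


/-- All `ZFSet` functions are classically definable; registered locally. -/
noncomputable def allDef {n : ℕ} (F : (Fin n → ZFSet.{0}) → ZFSet.{0}) :
    ZFSet.Definable n F := Classical.allZFSetDefinable F

attribute [local instance low] allDef

/-! ### The von Neumann ordinal of the rank of a set -/

/-- `oR x` is the von Neumann ordinal corresponding to `ZFSet.rank x`. -/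
noncomputable def oRF (x : ZFSet.{0}) (ih : ∀ y, y ∈ x → ZFSet.{0}) : ZFSet.{0} :=
  ZFSet.sUnion (ZFSet.image
    (fun y => @dite _ (y ∈ x) (Classical.dec _)
      (fun h => insert (ih y h) (ih y h)) (fun _ => ∅)) x)

noncomputable def oR : ZFSet.{0} → ZFSet.{0} := ZFSet.mem_wf.fix oRF

theorem oR_eq (x : ZFSet.{0}) : oR x = oRF x fun y _ => oR y :=
  WellFounded.fix_eq _ _ _

theorem mem_oR {x w : ZFSet.{0}} :
    w ∈ oR x ↔ ∃ y, y ∈ x ∧ (w = oR y ∨ w ∈ oR y) := by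
  rw [oR_eq, oRF, ZFSet.mem_sUnion]
  constructor
  · rintro ⟨u, hu, hw⟩
    rw [ZFSet.mem_image] at hu
    obtain ⟨y, hy, rfl⟩ := hu
    rw [dif_pos hy] at hw
    rw [ZFSet.mem_insert_iff] at hw
    exact ⟨y, hy, hw⟩
  · rintro ⟨y, hy, hw⟩
    refine ⟨insert (oR y) (oR y), ?_, ?_⟩
    · rw [ZFSet.mem_image]
      exact ⟨y, hy, by rw [dif_pos hy]⟩
    · rw [ZFSet.mem_insert_iff]; exact hw

theorem rank_oR (x : ZFSet.{0}) : rank (oR x) = rank x := by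
  induction x using ZFSet.inductionOn with
  | h x ih =>
    apply le_antisymm
    · rw [ZFSet.rank_le_iff]
      intro w hw
      rw [mem_oR] at hw
      obtain ⟨y, hy, hw | hw⟩ := hw
      · rw [hw, ih y hy]; exact ZFSet.rank_lt_of_mem hy
      · exact lt_trans (by rw [← ih y hy]; exact ZFSet.rank_lt_of_mem hw)
          (ZFSet.rank_lt_of_mem hy)
    · rw [ZFSet.rank_le_iff]
      intro y hy
      have : oR y ∈ oR x := mem_oR.2 ⟨y, hy, Or.inl rfl⟩
      have := ZFSet.rank_lt_of_mem this
      rwa [ih y hy] at this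

/-- Characterization of members of `oR x`. -/
theorem mem_oR_iff : ∀ (o : Ordinal.{0}) (x : ZFSet.{0}), rank x = o →
    ∀ w : ZFSet.{0}, (w ∈ oR x ↔ ∃ u, w = oR u ∧ rank u < rank x) := by
  intro o
  induction o using Ordinal.induction with
  | h o IH =>
    intro x hx w
    constructor
    · intro hw
      rw [mem_oR] at hw
      obtain ⟨y, hy, hw | hw⟩ := hw
      · exact ⟨y, hw, ZFSet.rank_lt_of_mem hy⟩
      · have hylt : rank y < o := hx ▸ ZFSet.rank_lt_of_mem hy
        obtain ⟨u, rfl, hu⟩ := (IH (rank y) hylt y rfl w).1 hw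
        exact ⟨u, rfl, lt_trans hu (hx ▸ hylt)⟩
    · rintro ⟨u, rfl, hu⟩
      obtain ⟨y, hy, huy⟩ := ZFSet.lt_rank_iff.1 hu
      have hylt : rank y < o := hx ▸ ZFSet.rank_lt_of_mem hy
      rcases lt_or_eq_of_le huy with huy | huy
      · -- oR u ∈ oR y
        have : oR u ∈ oR y := (IH (rank y) hylt y rfl (oR u)).2 ⟨u, rfl, huy⟩
        exact mem_oR.2 ⟨y, hy, Or.inr this⟩
      · -- rank u = rank y hence oR u = oR y
        have hequ : oR u = oR y := by
          apply ZFSet.ext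
          intro w'
          rw [IH (rank u) (huy ▸ hylt) u rfl w', IH (rank y) hylt y rfl w', huy]
        exact mem_oR.2 ⟨y, hy, Or.inl hequ⟩

theorem mem_oR' {x w : ZFSet.{0}} : w ∈ oR x ↔ ∃ u, w = oR u ∧ rank u < rank x :=
  mem_oR_iff (rank x) x rfl w

theorem oR_eq_of_rank_eq {u v : ZFSet.{0}} (h : rank u = rank v) : oR u = oR v := by
  apply ZFSet.ext; intro w
  rw [mem_oR', mem_oR', h]

theorem oR_mem_oR {u x : ZFSet.{0}} : oR u ∈ oR x ↔ rank u < rank x := by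
  constructor
  · intro h
    obtain ⟨p, hp, hplt⟩ := mem_oR'.1 h
    have : rank u = rank p := by
      have := congrArg rank hp
      rwa [rank_oR, rank_oR] at this
    rwa [this]
  · intro h; exact mem_oR'.2 ⟨u, rfl, h⟩

theorem oR_subset_oR {u v : ZFSet.{0}} : oR u ⊆ oR v ↔ rank u ≤ rank v := by
  constructor
  · intro h
    by_contra hc
    push_neg at hc
    exact ZFSet.mem_irrefl _ (h (oR_mem_oR.2 hc))
  · intro h w hw
    obtain ⟨p, rfl, hp⟩ := mem_oR'.1 hw
    exact mem_oR'.2 ⟨p, rfl, lt_of_lt_of_le hp h⟩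

theorem isOrdinal_oR (x : ZFSet.{0}) : (oR x).IsOrdinal := by
  constructor
  · intro w hw
    obtain ⟨u, rfl, hu⟩ := mem_oR'.1 hw
    intro w' hw'
    obtain ⟨p, rfl, hp⟩ := mem_oR'.1 hw'
    exact mem_oR'.2 ⟨p, rfl, lt_trans hp hu⟩
  · intro y z w hyz hzw hwx
    obtain ⟨u, rfl, hu⟩ := mem_oR'.1 hwx
    obtain ⟨p, rfl, hp⟩ := mem_oR'.1 hzw
    obtain ⟨q, rfl, hq⟩ := mem_oR'.1 hyz
    exact mem_oR'.2 ⟨q, rfl, lt_trans hq hp⟩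

/-! ### Transitive closure of a singleton -/

/-- `tcx x` is the transitive closure of `{x}`. -/
noncomputable def tcxF (x : ZFSet.{0}) (ih : ∀ y, y ∈ x → ZFSet.{0}) : ZFSet.{0} :=
  insert x (ZFSet.sUnion (ZFSet.image
    (fun y => @dite _ (y ∈ x) (Classical.dec _) (fun h => ih y h) (fun _ => ∅)) x))

noncomputable def tcx : ZFSet.{0} → ZFSet.{0} := ZFSet.mem_wf.fix tcxF

theorem tcx_eq (x : ZFSet.{0}) : tcx x = tcxF x fun y _ => tcx y :=
  WellFounded.fix_eq _ _ _

theorem mem_tcx {x w : ZFSet.{0}} :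
    w ∈ tcx x ↔ w = x ∨ ∃ y, y ∈ x ∧ w ∈ tcx y := by
  rw [tcx_eq, tcxF, ZFSet.mem_insert_iff, ZFSet.mem_sUnion]
  apply or_congr_right
  constructor
  · rintro ⟨u, hu, hw⟩
    rw [ZFSet.mem_image] at hu
    obtain ⟨y, hy, rfl⟩ := hu
    rw [dif_pos hy] at hw
    exact ⟨y, hy, hw⟩
  · rintro ⟨y, hy, hw⟩
    refine ⟨tcx y, ?_, hw⟩
    rw [ZFSet.mem_image]
    exact ⟨y, hy, by rw [dif_pos hy]⟩

theorem self_mem_tcx (x : ZFSet.{0}) : x ∈ tcx x := mem_tcx.2 (Or.inl rfl)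

theorem tcx_transitive : ∀ {x w u : ZFSet.{0}}, w ∈ tcx x → u ∈ w → u ∈ tcx x := by
  intro x
  induction x using ZFSet.inductionOn with
  | h x ih =>
    intro w u hw hu
    rcases mem_tcx.1 hw with rfl | ⟨y, hy, hw⟩
    · exact mem_tcx.2 (Or.inr ⟨u, hu, self_mem_tcx u⟩)
    · exact mem_tcx.2 (Or.inr ⟨y, hy, ih y hy hw hu⟩)

theorem tcx_min {T : Set ZFSet.{0}} (hT : ∀ a ∈ T, ∀ b ∈ a, b ∈ T) :
    ∀ {x : ZFSet.{0}}, x ∈ T → ∀ w ∈ tcx x, w ∈ T := by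
  intro x
  induction x using ZFSet.inductionOn with
  | h x ih =>
    intro hx w hw
    rcases mem_tcx.1 hw with rfl | ⟨y, hy, hw⟩
    · exact hx
    · exact ih y hy (hT x hx y hy) w hw

/-! ### Rank attempt functions -/

/-- The canonical rank-attempt function on `tcx x`. -/
noncomputable def attf (x : ZFSet.{0}) : ZFSet.{0} :=
  ZFSet.image (fun y => ZFSet.pair y (oR y)) (tcx x)

theorem mem_attf {x p : ZFSet.{0}} :
    p ∈ attf x ↔ ∃ y ∈ tcx x, p = ZFSet.pair y (oR y) := by
  rw [attf, ZFSet.mem_image]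
  exact ⟨fun ⟨y, hy, h⟩ => ⟨y, hy, h.symm⟩, fun ⟨y, hy, h⟩ => ⟨y, hy, h.symm⟩⟩

/-- A set `f` is a rank attempt: a function with `∈`-closed domain computing ranks. -/
def IsAtt (f : ZFSet.{0}) : Prop :=
  (∀ p ∈ f, ∃ u w : ZFSet.{0}, p = ZFSet.pair u w) ∧
  (∀ u w w' : ZFSet.{0}, ZFSet.pair u w ∈ f → ZFSet.pair u w' ∈ f → w = w') ∧
  (∀ u w : ZFSet.{0}, ZFSet.pair u w ∈ f → ∀ z ∈ u, ∃ w', ZFSet.pair z w' ∈ f) ∧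
  (∀ u w : ZFSet.{0}, ZFSet.pair u w ∈ f → ∀ t : ZFSet.{0},
    (t ∈ w ↔ ∃ z ∈ u, ∃ w', ZFSet.pair z w' ∈ f ∧ (t = w' ∨ t ∈ w')))

theorem isAtt_attf (x : ZFSet.{0}) : IsAtt (attf x) := by
  refine ⟨?_, ?_, ?_, ?_⟩
  · intro p hp
    obtain ⟨y, _, rfl⟩ := mem_attf.1 hp
    exact ⟨y, oR y, rfl⟩
  · intro u w w' hw hw'
    obtain ⟨y, _, hy⟩ := mem_attf.1 hw
    obtain ⟨y', _, hy'⟩ := mem_attf.1 hw'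
    obtain ⟨rfl, rfl⟩ := ZFSet.pair_injective hy
    obtain ⟨rfl, rfl⟩ := ZFSet.pair_injective hy'
    rfl
  · intro u w hu z hz
    obtain ⟨y, hy, hy'⟩ := mem_attf.1 hu
    obtain ⟨rfl, rfl⟩ := ZFSet.pair_injective hy'
    exact ⟨oR z, mem_attf.2 ⟨z, tcx_transitive hy hz, rfl⟩⟩
  · intro u w hu t
    obtain ⟨y, hy, hy'⟩ := mem_attf.1 hu
    obtain ⟨rfl, rfl⟩ := ZFSet.pair_injective hy'
    rw [mem_oR]
    constructor
    · rintro ⟨z, hz, hw⟩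
      exact ⟨z, hz, oR z, mem_attf.2 ⟨z, tcx_transitive hy hz, rfl⟩, hw⟩
    · rintro ⟨z, hz, w', hw', hw⟩
      obtain ⟨z', _, hz'⟩ := mem_attf.1 hw'
      obtain ⟨rfl, rfl⟩ := ZFSet.pair_injective hz'
      exact ⟨z, hz, hw⟩

theorem IsAtt.val_eq {f : ZFSet.{0}} (hf : IsAtt f) :
    ∀ {u w : ZFSet.{0}}, ZFSet.pair u w ∈ f → w = oR u := by
  intro u
  induction u using ZFSet.inductionOn with
  | h u ih =>
    intro w hw
    apply ZFSet.ext
    intro t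
    rw [hf.2.2.2 u w hw t, mem_oR]
    constructor
    · rintro ⟨z, hz, w', hw', ht⟩
      rw [ih z hz hw'] at ht
      exact ⟨z, hz, ht⟩
    · rintro ⟨z, hz, ht⟩
      obtain ⟨w', hw'⟩ := hf.2.2.1 u w hw z hz
      rw [ih z hz hw'] at hw'
      exact ⟨z, hz, oR z, hw', ht⟩

theorem pair_mem_attf_self (x : ZFSet.{0}) : ZFSet.pair x (oR x) ∈ attf x :=
  mem_attf.2 ⟨x, self_mem_tcx x, rfl⟩

theorem attf_ext : ∀ {x : ZFSet.{0}}, attf x =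
    insert (ZFSet.pair x (oR x)) (ZFSet.sUnion (ZFSet.image attf x)) := by
  intro x
  apply ZFSet.ext
  intro p
  rw [ZFSet.mem_insert_iff, ZFSet.mem_sUnion, mem_attf]
  constructor
  · rintro ⟨y, hy, rfl⟩
    rcases mem_tcx.1 hy with rfl | ⟨z, hz, hy⟩
    · exact Or.inl rfl
    · refine Or.inr ⟨attf z, ?_, mem_attf.2 ⟨y, hy, rfl⟩⟩
      rw [ZFSet.mem_image]
      exact ⟨z, hz, rfl⟩
  · rintro (rfl | ⟨S, hS, hp⟩)
    · exact ⟨x, self_mem_tcx x, rfl⟩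
    · rw [ZFSet.mem_image] at hS
      obtain ⟨z, hz, rfl⟩ := hS
      obtain ⟨y, hy, rfl⟩ := mem_attf.1 hp
      exact ⟨y, mem_tcx.2 (Or.inr ⟨z, hz, hy⟩), rfl⟩


/-! ### Formula helpers and realization lemmas -/

section FormulaTools

variable {L : FirstOrder.Language} [L.IsRelational]

def fNot {n : ℕ} (φ : L.BoundedFormula Empty n) : L.BoundedFormula Empty n :=
  φ.imp .falsum

def fAnd {n : ℕ} (φ ψ : L.BoundedFormula Empty n) : L.BoundedFormula Empty n :=
  fNot (φ.imp (fNot ψ))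

def fOr {n : ℕ} (φ ψ : L.BoundedFormula Empty n) : L.BoundedFormula Empty n :=
  (fNot φ).imp ψ

def fIff {n : ℕ} (φ ψ : L.BoundedFormula Empty n) : L.BoundedFormula Empty n :=
  fAnd (φ.imp ψ) (ψ.imp φ)

def fEx {n : ℕ} (φ : L.BoundedFormula Empty (n + 1)) : L.BoundedFormula Empty n :=
  fNot (fNot φ).all

def vt {n : ℕ} (i : Fin n) : L.Term (Empty ⊕ Fin n) := .var (Sum.inr i)

def fMem (memRel : L.Relations 2) {n : ℕ} (i j : Fin n) : L.BoundedFormula Empty n :=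
  .rel memRel ![vt i, vt j]

def fEq {n : ℕ} (i j : Fin n) : L.BoundedFormula Empty n := .equal (vt i) (vt j)

variable {M : VModel L} {n : ℕ} {v : Fin n → ZFSet.{0}}

theorem br_not {φ : L.BoundedFormula Empty n} :
    M.BRealize (fNot φ) v ↔ ¬ M.BRealize φ v := Iff.rfl

theorem br_and {φ ψ : L.BoundedFormula Empty n} :
    M.BRealize (fAnd φ ψ) v ↔ M.BRealize φ v ∧ M.BRealize ψ v := by
  show ¬ (M.BRealize φ v → ¬ M.BRealize ψ v) ↔ _
  tauto

theorem br_or {φ ψ : L.BoundedFormula Empty n} :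
    M.BRealize (fOr φ ψ) v ↔ M.BRealize φ v ∨ M.BRealize ψ v := by
  show (¬ M.BRealize φ v → M.BRealize ψ v) ↔ _
  tauto

theorem br_iff {φ ψ : L.BoundedFormula Empty n} :
    M.BRealize (fIff φ ψ) v ↔ (M.BRealize φ v ↔ M.BRealize ψ v) := by
  rw [fIff, br_and]
  show (M.BRealize φ v → M.BRealize ψ v) ∧ (M.BRealize ψ v → M.BRealize φ v) ↔ _
  tauto

theorem br_imp {φ ψ : L.BoundedFormula Empty n} :
    M.BRealize (φ.imp ψ) v ↔ (M.BRealize φ v → M.BRealize ψ v) := Iff.rfl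

theorem br_all {φ : L.BoundedFormula Empty (n + 1)} :
    M.BRealize φ.all v ↔ ∀ x ∈ M.carrier, M.BRealize φ (Fin.snoc v x) := Iff.rfl

theorem br_ex {φ : L.BoundedFormula Empty (n + 1)} :
    M.BRealize (fEx φ) v ↔ ∃ x ∈ M.carrier, M.BRealize φ (Fin.snoc v x) := by
  rw [fEx, br_not]
  show ¬ (∀ x ∈ M.carrier, ¬ _) ↔ _
  push_neg
  rfl

theorem br_eq {i j : Fin n} : M.BRealize (fEq i j) v ↔ v i = v j := Iff.rfl

theorem br_mem {memRel : L.Relations 2} {i j : Fin n} :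
    M.BRealize (fMem memRel i j) v ↔ M.rel memRel ![v i, v j] := by
  have h : (fun k => interpTerm v ((![vt i, vt j] : Fin 2 → L.Term (Empty ⊕ Fin n)) k))
      = ![v i, v j] := by
    funext k
    fin_cases k <;> rfl
  show M.rel memRel (fun k => interpTerm v ((![vt i, vt j] : Fin 2 → L.Term (Empty ⊕ Fin n)) k))
    ↔ M.rel memRel ![v i, v j]
  rw [h]

theorem br_mem' {memRel : L.Relations 2} (hMC : MemCorrect memRel M) {i j : Fin n}
    (hv : ∀ k, v k ∈ M.carrier) :
    M.BRealize (fMem memRel i j) v ↔ v i ∈ v j := by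
  rw [br_mem]
  exact hMC _ _ (hv i) (hv j)

theorem snoc_mem_of {S : Set ZFSet.{0}} (hv : ∀ i, v i ∈ S) {x : ZFSet.{0}} (hx : x ∈ S) :
    ∀ i : Fin (n + 1), (Fin.snoc v x : Fin (n + 1) → ZFSet.{0}) i ∈ S := by
  intro i
  refine Fin.lastCases ?_ (fun j => ?_) i
  · rw [Fin.snoc_last]; exact hx
  · rw [Fin.snoc_castSucc]; exact hv j

theorem interpTerm_mem {S : Set ZFSet.{0}} (hv : ∀ i, v i ∈ S) :
    ∀ t : L.Term (Empty ⊕ Fin n), interpTerm v t ∈ S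
  | .var (Sum.inr i) => hv i
  | .var (Sum.inl e) => e.elim
  | .func f _ => isEmptyElim f

/-! ### Lifting a formula by one variable -/

def insF (m : ℕ) {n : ℕ} (i : Fin n) : Fin (n + 1) :=
  if (i : ℕ) < m then i.castSucc else i.succ

def liftT1 (m : ℕ) {n : ℕ} : L.Term (Empty ⊕ Fin n) → L.Term (Empty ⊕ Fin (n + 1))
  | .var (Sum.inl e) => e.elim
  | .var (Sum.inr i) => .var (Sum.inr (insF m i))
  | .func f _ => isEmptyElim f

def lift1 (m : ℕ) : ∀ {n : ℕ}, L.BoundedFormula Empty n → L.BoundedFormula Empty (n + 1)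
  | _, .falsum => .falsum
  | _, .equal t u => .equal (liftT1 m t) (liftT1 m u)
  | _, .rel R ts => .rel R fun i => liftT1 m (ts i)
  | _, .imp φ ψ => .imp (lift1 m φ) (lift1 m ψ)
  | _, .all φ => .all (lift1 m φ)

theorem interpTerm_liftT1 {m n : ℕ} (w : Fin (n + 1) → ZFSet.{0}) :
    ∀ t : L.Term (Empty ⊕ Fin n),
      interpTerm w (liftT1 m t) = interpTerm (fun i => w (insF m i)) t
  | .var (Sum.inr _) => rfl
  | .var (Sum.inl e) => e.elim
  | .func f _ => isEmptyElim f

theorem snoc_insF {n m : ℕ} (hm : m ≤ n) (w : Fin (n + 1) → ZFSet.{0}) (x : ZFSet.{0}) :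
    (fun i : Fin (n + 1) => (Fin.snoc w x : Fin (n + 2) → ZFSet.{0}) (insF m i)) =
      (Fin.snoc (fun i : Fin n => w (insF m i)) x : Fin (n + 1) → ZFSet.{0}) := by
  funext i
  refine Fin.lastCases ?_ (fun j => ?_) i
  · have h1 : insF m (Fin.last n) = Fin.last (n + 1) := by
      rw [insF, if_neg (by simp; omega), Fin.succ_last]
    rw [h1, Fin.snoc_last, Fin.snoc_last]
  · rw [Fin.snoc_castSucc]
    by_cases hj : (j : ℕ) < m
    · have h1 : insF m j.castSucc = j.castSucc.castSucc := by
        rw [insF, if_pos (by simpa using hj)]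
      have h2 : insF m j = j.castSucc := if_pos hj
      rw [h1, Fin.snoc_castSucc, h2]
    · have h1 : insF m j.castSucc = j.succ.castSucc := by
        rw [insF, if_neg (by simpa using hj), Fin.succ_castSucc]
      have h2 : insF m j = j.succ := if_neg hj
      rw [h1, Fin.snoc_castSucc, h2]

theorem br_lift1 : ∀ {n : ℕ} (φ : L.BoundedFormula Empty n) (m : ℕ), m ≤ n →
    ∀ w : Fin (n + 1) → ZFSet.{0},
      M.BRealize (lift1 m φ) w ↔ M.BRealize φ (fun i => w (insF m i)) := by
  intro n φ
  induction φ with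
  | falsum => exact fun _ _ _ => Iff.rfl
  | equal t u =>
    intro m hm w
    show interpTerm w (liftT1 m t) = interpTerm w (liftT1 m u) ↔ _
    rw [interpTerm_liftT1, interpTerm_liftT1]
    exact Iff.rfl
  | rel R ts =>
    intro m hm w
    have h : (fun i => interpTerm w (liftT1 m (ts i))) =
        fun i => interpTerm (fun k => w (insF m k)) (ts i) := by
      funext i; exact interpTerm_liftT1 w (ts i)
    show M.rel R (fun i => interpTerm w (liftT1 m (ts i))) ↔
      M.rel R fun i => interpTerm (fun k => w (insF m k)) (ts i)
    rw [h]
  | imp φ ψ ihφ ihψ =>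
    intro m hm w
    exact imp_congr (ihφ m hm w) (ihψ m hm w)
  | all φ ihφ =>
    intro m hm w
    show (∀ x ∈ M.carrier, M.BRealize (lift1 m φ) (Fin.snoc w x)) ↔
      ∀ x ∈ M.carrier, M.BRealize φ ((Fin.snoc (fun i => w (insF m i)) x))
    refine forall₂_congr fun x _ => ?_
    rw [ihφ m (hm.trans (Nat.le_succ _)) (Fin.snoc w x), snoc_insF hm]

end FormulaTools


/-! ### Internal set-theoretic formulas and their meaning in a transitive model -/

section Internal

set_option linter.unusedSectionVars false

variable {L : FirstOrder.Language} [L.IsRelational] (memRel : L.Relations 2)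

/-- `v i ⊆ v j`. -/
def fSub {n : ℕ} (i j : Fin n) : L.BoundedFormula Empty n :=
  ((fMem memRel (Fin.last n) i.castSucc).imp (fMem memRel (Fin.last n) j.castSucc)).all

/-- `v j = {v i}`. -/
def fSing {n : ℕ} (i j : Fin n) : L.BoundedFormula Empty n :=
  (fIff (fMem memRel (Fin.last n) j.castSucc) (fEq (Fin.last n) i.castSucc)).all

/-- `v k = {v i, v j}`. -/
def fUpair {n : ℕ} (i j k : Fin n) : L.BoundedFormula Empty n :=
  (fIff (fMem memRel (Fin.last n) k.castSucc)
    (fOr (fEq (Fin.last n) i.castSucc) (fEq (Fin.last n) j.castSucc))).all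

/-- `v k = pair (v i) (v j)` (Kuratowski pair). -/
def fPairK {n : ℕ} (i j k : Fin n) : L.BoundedFormula Empty n :=
  (fIff (fMem memRel (Fin.last n) k.castSucc)
    (fOr (fSing memRel i.castSucc (Fin.last n))
      (fUpair memRel i.castSucc j.castSucc (Fin.last n)))).all

/-- `pair (v i) (v j) ∈ v f`. -/
def fPairMem {n : ℕ} (i j f : Fin n) : L.BoundedFormula Empty n :=
  fEx (fAnd (fPairK memRel i.castSucc j.castSucc (Fin.last n))
    (fMem memRel (Fin.last n) f.castSucc))

/-- `v i` is a transitive set. -/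
def fTransSet {n : ℕ} (i : Fin n) : L.BoundedFormula Empty n :=
  ((fMem memRel (Fin.last n) i.castSucc).imp (fSub memRel (Fin.last n) i.castSucc)).all

variable {memRel}
variable {A : VModel L}

/-- Abbreviation for the pairing-closure hypothesis. -/
def UpCl (A : VModel L) : Prop :=
  ∀ x y : ZFSet.{0}, x ∈ A.carrier → y ∈ A.carrier → ({x, y} : ZFSet.{0}) ∈ A.carrier

theorem singleton_pair_eq (x : ZFSet.{0}) : ({x} : ZFSet.{0}) = ({x, x} : ZFSet.{0}) := by
  apply ZFSet.ext; intro t; simp [ZFSet.mem_pair]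

theorem sing_mem_of (hUp : UpCl A) (x : ZFSet.{0}) (hx : x ∈ A.carrier) : ({x} : ZFSet.{0}) ∈ A.carrier := by
  rw [singleton_pair_eq]; exact hUp x x hx hx

theorem pairK_mem_of (hUp : UpCl A) {x y : ZFSet.{0}} (hx : x ∈ A.carrier) (hy : y ∈ A.carrier) :
    ZFSet.pair x y ∈ A.carrier :=
  hUp _ _ (sing_mem_of hUp x hx) (hUp x y hx hy)

theorem char_sub (hT : TransClass A.carrier) (hMC : MemCorrect memRel A) {n : ℕ} {w : Fin n → ZFSet.{0}} (hw : ∀ i, w i ∈ A.carrier) (i j : Fin n) :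
    A.BRealize (fSub memRel i j) w ↔ w i ⊆ w j := by
  rw [fSub, br_all]
  constructor
  · intro h t ht
    have hx : t ∈ A.carrier := hT (hw i) ht
    have h2 := h t hx
    rw [br_imp, br_mem' hMC (snoc_mem_of hw hx), br_mem' hMC (snoc_mem_of hw hx)] at h2
    simp only [Fin.snoc_last, Fin.snoc_castSucc] at h2
    exact h2 ht
  · intro h t hx
    rw [br_imp, br_mem' hMC (snoc_mem_of hw hx), br_mem' hMC (snoc_mem_of hw hx)]
    simp only [Fin.snoc_last, Fin.snoc_castSucc]
    exact fun ht => h ht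

theorem char_sing (hT : TransClass A.carrier) (hMC : MemCorrect memRel A) {n : ℕ} {w : Fin n → ZFSet.{0}} (hw : ∀ i, w i ∈ A.carrier) (i j : Fin n) :
    A.BRealize (fSing memRel i j) w ↔ w j = {w i} := by
  rw [fSing, br_all]
  constructor
  · intro h
    apply ZFSet.ext
    intro t
    rw [ZFSet.mem_singleton]
    constructor
    · intro ht
      have hx : t ∈ A.carrier := hT (hw j) ht
      have h2 := h t hx
      rw [br_iff, br_mem' hMC (snoc_mem_of hw hx), br_eq] at h2
      simp only [Fin.snoc_last, Fin.snoc_castSucc] at h2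
      exact h2.1 ht
    · rintro rfl
      have h2 := h (w i) (hw i)
      rw [br_iff, br_mem' hMC (snoc_mem_of hw (hw i)), br_eq] at h2
      simp only [Fin.snoc_last, Fin.snoc_castSucc] at h2
      exact h2.2 trivial
  · rintro h t hx
    rw [br_iff, br_mem' hMC (snoc_mem_of hw hx), br_eq]
    simp only [Fin.snoc_last, Fin.snoc_castSucc, h, ZFSet.mem_singleton]

theorem char_upair (hT : TransClass A.carrier) (hMC : MemCorrect memRel A) {n : ℕ} {w : Fin n → ZFSet.{0}} (hw : ∀ i, w i ∈ A.carrier)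
    (i j k : Fin n) :
    A.BRealize (fUpair memRel i j k) w ↔ w k = {w i, w j} := by
  rw [fUpair, br_all]
  constructor
  · intro h
    apply ZFSet.ext
    intro t
    rw [ZFSet.mem_pair]
    constructor
    · intro ht
      have hx : t ∈ A.carrier := hT (hw k) ht
      have h2 := h t hx
      rw [br_iff, br_mem' hMC (snoc_mem_of hw hx), br_or, br_eq, br_eq] at h2
      simp only [Fin.snoc_last, Fin.snoc_castSucc] at h2
      exact h2.1 ht
    · rintro (rfl | rfl)
      · have h2 := h (w i) (hw i)
        rw [br_iff, br_mem' hMC (snoc_mem_of hw (hw i)), br_or, br_eq, br_eq] at h2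
        simp only [Fin.snoc_last, Fin.snoc_castSucc] at h2
        exact h2.2 (Or.inl trivial)
      · have h2 := h (w j) (hw j)
        rw [br_iff, br_mem' hMC (snoc_mem_of hw (hw j)), br_or, br_eq, br_eq] at h2
        simp only [Fin.snoc_last, Fin.snoc_castSucc] at h2
        exact h2.2 (Or.inr trivial)
  · rintro h t hx
    rw [br_iff, br_mem' hMC (snoc_mem_of hw hx), br_or, br_eq, br_eq]
    simp only [Fin.snoc_last, Fin.snoc_castSucc, h, ZFSet.mem_pair]

theorem char_pairK (hT : TransClass A.carrier) (hMC : MemCorrect memRel A) (hUp : UpCl A) {n : ℕ} {w : Fin n → ZFSet.{0}} (hw : ∀ i, w i ∈ A.carrier)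
    (i j k : Fin n) :
    A.BRealize (fPairK memRel i j k) w ↔ w k = ZFSet.pair (w i) (w j) := by
  rw [fPairK, br_all]
  have hpair : ZFSet.pair (w i) (w j) = ({{w i}, {w i, w j}} : ZFSet.{0}) := rfl
  have key : ∀ t, t ∈ A.carrier →
      (A.BRealize (fIff (fMem memRel (Fin.last n) k.castSucc)
        (fOr (fSing memRel i.castSucc (Fin.last n))
          (fUpair memRel i.castSucc j.castSucc (Fin.last n)))) (Fin.snoc w t) ↔
        (t ∈ w k ↔ t = {w i} ∨ t = {w i, w j})) := by
    intro t hx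
    rw [br_iff, br_mem' hMC (snoc_mem_of hw hx), br_or,
      char_sing hT hMC (snoc_mem_of hw hx), char_upair hT hMC (snoc_mem_of hw hx)]
    simp only [Fin.snoc_last, Fin.snoc_castSucc]
  constructor
  · intro h
    apply ZFSet.ext
    intro t
    rw [hpair, ZFSet.mem_pair]
    constructor
    · intro ht
      have hx : t ∈ A.carrier := hT (hw k) ht
      exact ((key t hx).1 (h t hx)).1 ht
    · rintro (rfl | rfl)
      · have hx : ({w i} : ZFSet.{0}) ∈ A.carrier := sing_mem_of hUp _ (hw i)
        exact ((key _ hx).1 (h _ hx)).2 (Or.inl rfl)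
      · have hx : ({w i, w j} : ZFSet.{0}) ∈ A.carrier := hUp _ _ (hw i) (hw j)
        exact ((key _ hx).1 (h _ hx)).2 (Or.inr rfl)
  · rintro h t hx
    rw [key t hx, h, hpair, ZFSet.mem_pair]

theorem char_pairMem (hT : TransClass A.carrier) (hMC : MemCorrect memRel A) (hUp : UpCl A) {n : ℕ} {w : Fin n → ZFSet.{0}} (hw : ∀ i, w i ∈ A.carrier)
    (i j f : Fin n) :
    A.BRealize (fPairMem memRel i j f) w ↔ ZFSet.pair (w i) (w j) ∈ w f := by
  rw [fPairMem, br_ex]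
  constructor
  · rintro ⟨p, hp, h⟩
    rw [br_and, char_pairK hT hMC hUp (snoc_mem_of hw hp),
      br_mem' hMC (snoc_mem_of hw hp)] at h
    simp only [Fin.snoc_last, Fin.snoc_castSucc] at h
    rw [← h.1]
    exact h.2
  · intro h
    have hp : ZFSet.pair (w i) (w j) ∈ A.carrier := hT (hw f) h
    refine ⟨_, hp, ?_⟩
    rw [br_and, char_pairK hT hMC hUp (snoc_mem_of hw hp), br_mem' hMC (snoc_mem_of hw hp)]
    simp only [Fin.snoc_last, Fin.snoc_castSucc]
    exact ⟨trivial, h⟩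

theorem char_transSet (hT : TransClass A.carrier) (hMC : MemCorrect memRel A) {n : ℕ} {w : Fin n → ZFSet.{0}} (hw : ∀ i, w i ∈ A.carrier)
    (i : Fin n) :
    A.BRealize (fTransSet memRel i) w ↔ ZFSet.IsTransitive (w i) := by
  rw [fTransSet, br_all]
  constructor
  · intro h y hy
    have hx : y ∈ A.carrier := hT (hw i) hy
    have h2 := h y hx
    rw [br_imp, br_mem' hMC (snoc_mem_of hw hx), char_sub hT hMC (snoc_mem_of hw hx)] at h2
    simp only [Fin.snoc_last, Fin.snoc_castSucc] at h2
    exact h2 hy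
  · intro h y hx
    rw [br_imp, br_mem' hMC (snoc_mem_of hw hx), char_sub hT hMC (snoc_mem_of hw hx)]
    simp only [Fin.snoc_last, Fin.snoc_castSucc]
    exact fun hy => h y hy

end Internal


/-! ### The internal attempt-function formula -/

section Att

set_option linter.unusedSectionVars false

variable {L : FirstOrder.Language} [L.IsRelational] (memRel : L.Relations 2)

/-- Every element of `v f` is a pair. -/
def fAtt1 {n : ℕ} (f : Fin n) : L.BoundedFormula Empty n :=
  ((fMem memRel (Fin.last n) f.castSucc).imp
    (fEx (fEx (fPairK memRel ((Fin.last (n + 1)).castSucc) (Fin.last (n + 2))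
      ((Fin.last n).castSucc.castSucc))))).all

/-- `v f` is functional. -/
def fAtt2 {n : ℕ} (f : Fin n) : L.BoundedFormula Empty n :=
  ((((fPairMem memRel ((Fin.last n).castSucc.castSucc) ((Fin.last (n + 1)).castSucc)
      f.castSucc.castSucc.castSucc).imp
    ((fPairMem memRel ((Fin.last n).castSucc.castSucc) (Fin.last (n + 2))
      f.castSucc.castSucc.castSucc).imp
    (fEq ((Fin.last (n + 1)).castSucc) (Fin.last (n + 2))))).all).all).all

/-- The domain of `v f` is `∈`-closed. -/
def fAtt3 {n : ℕ} (f : Fin n) : L.BoundedFormula Empty n :=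
  (((fPairMem memRel ((Fin.last n).castSucc) (Fin.last (n + 1))
      f.castSucc.castSucc).imp
    (((fMem memRel (Fin.last (n + 2)) (Fin.last n).castSucc.castSucc).imp
      (fEx (fPairMem memRel ((Fin.last (n + 2)).castSucc) (Fin.last (n + 3))
        f.castSucc.castSucc.castSucc.castSucc))).all)).all).all

/-- The recursion equation for values of `v f`. -/
def fAtt4 {n : ℕ} (f : Fin n) : L.BoundedFormula Empty n :=
  (((fPairMem memRel ((Fin.last n).castSucc) (Fin.last (n + 1))
      f.castSucc.castSucc).imp
    ((fIff (fMem memRel (Fin.last (n + 2)) ((Fin.last (n + 1)).castSucc))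
      (fEx (fAnd
        (fMem memRel (Fin.last (n + 3)) ((Fin.last n).castSucc.castSucc.castSucc))
        (fEx (fAnd
          (fPairMem memRel ((Fin.last (n + 3)).castSucc) (Fin.last (n + 4))
            f.castSucc.castSucc.castSucc.castSucc.castSucc)
          (fOr (fEq ((Fin.last (n + 2)).castSucc.castSucc) (Fin.last (n + 4)))
            (fMem memRel ((Fin.last (n + 2)).castSucc.castSucc)
              (Fin.last (n + 4))))))))).all)).all).all

/-- `v f` is a rank attempt. -/
def fIsAtt {n : ℕ} (f : Fin n) : L.BoundedFormula Empty n :=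
  fAnd (fAtt1 memRel f) (fAnd (fAtt2 memRel f) (fAnd (fAtt3 memRel f) (fAtt4 memRel f)))

variable {memRel}
variable {A : VModel L}

theorem pair_comp_mem (hT : TransClass A.carrier) {u w : ZFSet.{0}}
    (hp : ZFSet.pair u w ∈ A.carrier) : u ∈ A.carrier ∧ w ∈ A.carrier := by
  have h1 : ({u} : ZFSet.{0}) ∈ ZFSet.pair u w := ZFSet.mem_pair.2 (Or.inl rfl)
  have h2 : ({u, w} : ZFSet.{0}) ∈ ZFSet.pair u w := ZFSet.mem_pair.2 (Or.inr rfl)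
  constructor
  · exact hT (hT hp h1) (ZFSet.mem_singleton.2 rfl)
  · exact hT (hT hp h2) (ZFSet.mem_pair.2 (Or.inr rfl))

theorem char_att1 (hT : TransClass A.carrier) (hMC : MemCorrect memRel A) (hUp : UpCl A)
    {n : ℕ} {w : Fin n → ZFSet.{0}} (hw : ∀ i, w i ∈ A.carrier) (f : Fin n) :
    A.BRealize (fAtt1 memRel f) w ↔
      ∀ p ∈ w f, ∃ u v : ZFSet.{0}, p = ZFSet.pair u v := by
  rw [fAtt1, br_all]
  constructor
  · intro h p hp
    have hpA : p ∈ A.carrier := hT (hw f) hp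
    have h2 := h p hpA
    rw [br_imp, br_mem' hMC (snoc_mem_of hw hpA), br_ex] at h2
    simp only [Fin.snoc_last, Fin.snoc_castSucc] at h2
    obtain ⟨u, huA, h3⟩ := h2 hp
    rw [br_ex] at h3
    obtain ⟨v, hvA, h4⟩ := h3
    rw [char_pairK hT hMC hUp (snoc_mem_of (snoc_mem_of (snoc_mem_of hw hpA) huA) hvA)] at h4
    simp only [Fin.snoc_last, Fin.snoc_castSucc] at h4
    exact ⟨u, v, h4⟩
  · intro h p hpA
    rw [br_imp, br_mem' hMC (snoc_mem_of hw hpA), br_ex]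
    simp only [Fin.snoc_last, Fin.snoc_castSucc]
    intro hp
    obtain ⟨u, v, rfl⟩ := h p hp
    obtain ⟨huA, hvA⟩ := pair_comp_mem hT hpA
    refine ⟨u, huA, ?_⟩
    rw [br_ex]
    refine ⟨v, hvA, ?_⟩
    rw [char_pairK hT hMC hUp (snoc_mem_of (snoc_mem_of (snoc_mem_of hw hpA) huA) hvA)]
    simp only [Fin.snoc_last, Fin.snoc_castSucc]

theorem char_att2 (hT : TransClass A.carrier) (hMC : MemCorrect memRel A) (hUp : UpCl A)
    {n : ℕ} {w : Fin n → ZFSet.{0}} (hw : ∀ i, w i ∈ A.carrier) (f : Fin n) :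
    A.BRealize (fAtt2 memRel f) w ↔
      ∀ u v v' : ZFSet.{0}, ZFSet.pair u v ∈ w f → ZFSet.pair u v' ∈ w f → v = v' := by
  rw [fAtt2, br_all]
  constructor
  · intro h u v v' h1 h2
    have huA : u ∈ A.carrier := (pair_comp_mem hT (hT (hw f) h1)).1
    have hvA : v ∈ A.carrier := (pair_comp_mem hT (hT (hw f) h1)).2
    have hv'A : v' ∈ A.carrier := (pair_comp_mem hT (hT (hw f) h2)).2
    have h3 := h u huA
    rw [br_all] at h3
    have h4 := h3 v hvA
    rw [br_all] at h4
    have h5 := h4 v' hv'A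
    rw [br_imp, br_imp,
      char_pairMem hT hMC hUp
        (snoc_mem_of (snoc_mem_of (snoc_mem_of hw huA) hvA) hv'A),
      char_pairMem hT hMC hUp
        (snoc_mem_of (snoc_mem_of (snoc_mem_of hw huA) hvA) hv'A),
      br_eq] at h5
    simp only [Fin.snoc_last, Fin.snoc_castSucc] at h5
    exact h5 h1 h2
  · intro h u huA
    rw [br_all]
    intro v hvA
    rw [br_all]
    intro v' hv'A
    rw [br_imp, br_imp,
      char_pairMem hT hMC hUp
        (snoc_mem_of (snoc_mem_of (snoc_mem_of hw huA) hvA) hv'A),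
      char_pairMem hT hMC hUp
        (snoc_mem_of (snoc_mem_of (snoc_mem_of hw huA) hvA) hv'A),
      br_eq]
    simp only [Fin.snoc_last, Fin.snoc_castSucc]
    exact h u v v'

theorem char_att3 (hT : TransClass A.carrier) (hMC : MemCorrect memRel A) (hUp : UpCl A)
    {n : ℕ} {w : Fin n → ZFSet.{0}} (hw : ∀ i, w i ∈ A.carrier) (f : Fin n) :
    A.BRealize (fAtt3 memRel f) w ↔
      ∀ u v : ZFSet.{0}, ZFSet.pair u v ∈ w f → ∀ z ∈ u, ∃ v', ZFSet.pair z v' ∈ w f := by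
  rw [fAtt3, br_all]
  constructor
  · intro h u v h1 z hz
    have huA : u ∈ A.carrier := (pair_comp_mem hT (hT (hw f) h1)).1
    have hvA : v ∈ A.carrier := (pair_comp_mem hT (hT (hw f) h1)).2
    have hzA : z ∈ A.carrier := hT huA hz
    have h3 := h u huA
    rw [br_all] at h3
    have h4 := h3 v hvA
    rw [br_imp,
      char_pairMem hT hMC hUp (snoc_mem_of (snoc_mem_of hw huA) hvA), br_all] at h4
    simp only [Fin.snoc_last, Fin.snoc_castSucc] at h4
    have h5 := h4 h1 z hzA
    rw [br_imp, br_mem' hMC (snoc_mem_of (snoc_mem_of (snoc_mem_of hw huA) hvA) hzA),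
      br_ex] at h5
    simp only [Fin.snoc_last, Fin.snoc_castSucc] at h5
    obtain ⟨v', hv'A, h6⟩ := h5 hz
    rw [char_pairMem hT hMC hUp
      (snoc_mem_of (snoc_mem_of (snoc_mem_of (snoc_mem_of hw huA) hvA) hzA) hv'A)] at h6
    simp only [Fin.snoc_last, Fin.snoc_castSucc] at h6
    exact ⟨v', h6⟩
  · intro h u huA
    rw [br_all]
    intro v hvA
    rw [br_imp, char_pairMem hT hMC hUp (snoc_mem_of (snoc_mem_of hw huA) hvA), br_all]
    simp only [Fin.snoc_last, Fin.snoc_castSucc]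
    intro h1 z hzA
    rw [br_imp, br_mem' hMC (snoc_mem_of (snoc_mem_of (snoc_mem_of hw huA) hvA) hzA), br_ex]
    simp only [Fin.snoc_last, Fin.snoc_castSucc]
    intro hz
    obtain ⟨v', hv'⟩ := h u v h1 z hz
    have hv'A : v' ∈ A.carrier := (pair_comp_mem hT (hT (hw f) hv')).2
    refine ⟨v', hv'A, ?_⟩
    rw [char_pairMem hT hMC hUp
      (snoc_mem_of (snoc_mem_of (snoc_mem_of (snoc_mem_of hw huA) hvA) hzA) hv'A)]
    simp only [Fin.snoc_last, Fin.snoc_castSucc]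
    exact hv'

theorem char_att4 (hT : TransClass A.carrier) (hMC : MemCorrect memRel A) (hUp : UpCl A)
    {n : ℕ} {w : Fin n → ZFSet.{0}} (hw : ∀ i, w i ∈ A.carrier) (f : Fin n) :
    A.BRealize (fAtt4 memRel f) w ↔
      ∀ u v : ZFSet.{0}, ZFSet.pair u v ∈ w f → ∀ t : ZFSet.{0},
        (t ∈ v ↔ ∃ z ∈ u, ∃ v', ZFSet.pair z v' ∈ w f ∧ (t = v' ∨ t ∈ v')) := by
  rw [fAtt4, br_all]
  have inner : ∀ (u v t : ZFSet.{0}), u ∈ A.carrier → v ∈ A.carrier → t ∈ A.carrier →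
      (A.BRealize (fEx (fAnd
        (fMem memRel (Fin.last (n + 3)) ((Fin.last n).castSucc.castSucc.castSucc))
        (fEx (fAnd
          (fPairMem memRel ((Fin.last (n + 3)).castSucc) (Fin.last (n + 4))
            ((f.castSucc.castSucc.castSucc.castSucc.castSucc : Fin (n + 5))))
          (fOr (fEq ((Fin.last (n + 2)).castSucc.castSucc) (Fin.last (n + 4)))
            (fMem memRel ((Fin.last (n + 2)).castSucc.castSucc)
              (Fin.last (n + 4))))))))
        (Fin.snoc (Fin.snoc (Fin.snoc w u) v) t) ↔
        ∃ z ∈ u, ∃ v', ZFSet.pair z v' ∈ w f ∧ (t = v' ∨ t ∈ v')) := by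
    intro u v t huA hvA htA
    have hw3 := snoc_mem_of (snoc_mem_of (snoc_mem_of hw huA) hvA) htA
    rw [br_ex]
    constructor
    · rintro ⟨z, hzA, h1⟩
      rw [br_and, br_mem' hMC (snoc_mem_of hw3 hzA), br_ex] at h1
      simp only [Fin.snoc_last, Fin.snoc_castSucc] at h1
      obtain ⟨hzu, v', hv'A, h2⟩ := h1
      rw [br_and, char_pairMem hT hMC hUp (snoc_mem_of (snoc_mem_of hw3 hzA) hv'A),
        br_or, br_eq, br_mem' hMC (snoc_mem_of (snoc_mem_of hw3 hzA) hv'A)] at h2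
      simp only [Fin.snoc_last, Fin.snoc_castSucc] at h2
      exact ⟨z, hzu, v', h2.1, h2.2⟩
    · rintro ⟨z, hzu, v', hv', ht⟩
      have hzA : z ∈ A.carrier := hT huA hzu
      have hv'A : v' ∈ A.carrier := (pair_comp_mem hT (hT (hw f) hv')).2
      refine ⟨z, hzA, ?_⟩
      rw [br_and, br_mem' hMC (snoc_mem_of hw3 hzA), br_ex]
      simp only [Fin.snoc_last, Fin.snoc_castSucc]
      refine ⟨hzu, v', hv'A, ?_⟩
      rw [br_and, char_pairMem hT hMC hUp (snoc_mem_of (snoc_mem_of hw3 hzA) hv'A),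
        br_or, br_eq, br_mem' hMC (snoc_mem_of (snoc_mem_of hw3 hzA) hv'A)]
      simp only [Fin.snoc_last, Fin.snoc_castSucc]
      exact ⟨hv', ht⟩
  constructor
  · intro h u v h1 t
    have huA : u ∈ A.carrier := (pair_comp_mem hT (hT (hw f) h1)).1
    have hvA : v ∈ A.carrier := (pair_comp_mem hT (hT (hw f) h1)).2
    constructor
    · intro htv
      have htA : t ∈ A.carrier := hT hvA htv
      have h3 := h u huA
      rw [br_all] at h3
      have h4 := h3 v hvA
      rw [br_imp, char_pairMem hT hMC hUp (snoc_mem_of (snoc_mem_of hw huA) hvA),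
        br_all] at h4
      simp only [Fin.snoc_last, Fin.snoc_castSucc] at h4
      have h5 := h4 h1 t htA
      rw [br_iff, br_mem' hMC (snoc_mem_of (snoc_mem_of (snoc_mem_of hw huA) hvA) htA),
        inner u v t huA hvA htA] at h5
      simp only [Fin.snoc_last, Fin.snoc_castSucc] at h5
      exact h5.1 htv
    · rintro ⟨z, hzu, v', hv', ht⟩
      have hv'A : v' ∈ A.carrier := (pair_comp_mem hT (hT (hw f) hv')).2
      have htA : t ∈ A.carrier := by
        rcases ht with rfl | ht
        · exact hv'A
        · exact hT hv'A ht
      have h3 := h u huA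
      rw [br_all] at h3
      have h4 := h3 v hvA
      rw [br_imp, char_pairMem hT hMC hUp (snoc_mem_of (snoc_mem_of hw huA) hvA),
        br_all] at h4
      simp only [Fin.snoc_last, Fin.snoc_castSucc] at h4
      have h5 := h4 h1 t htA
      rw [br_iff, br_mem' hMC (snoc_mem_of (snoc_mem_of (snoc_mem_of hw huA) hvA) htA),
        inner u v t huA hvA htA] at h5
      simp only [Fin.snoc_last, Fin.snoc_castSucc] at h5
      exact h5.2 ⟨z, hzu, v', hv', ht⟩
  · intro h u huA
    rw [br_all]
    intro v hvA
    rw [br_imp, char_pairMem hT hMC hUp (snoc_mem_of (snoc_mem_of hw huA) hvA), br_all]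
    simp only [Fin.snoc_last, Fin.snoc_castSucc]
    intro h1 t htA
    rw [br_iff, br_mem' hMC (snoc_mem_of (snoc_mem_of (snoc_mem_of hw huA) hvA) htA),
      inner u v t huA hvA htA]
    simp only [Fin.snoc_last, Fin.snoc_castSucc]
    exact h u v h1 t

theorem char_isAtt (hT : TransClass A.carrier) (hMC : MemCorrect memRel A) (hUp : UpCl A)
    {n : ℕ} {w : Fin n → ZFSet.{0}} (hw : ∀ i, w i ∈ A.carrier) (f : Fin n) :
    A.BRealize (fIsAtt memRel f) w ↔ IsAtt (w f) := by
  rw [fIsAtt, br_and, br_and, br_and, char_att1 hT hMC hUp hw, char_att2 hT hMC hUp hw,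
    char_att3 hT hMC hUp hw, char_att4 hT hMC hUp hw]
  rfl

end Att


/-! ### Closure of admissible models under rank attempts -/

section Closure

set_option linter.unusedSectionVars false

variable {L : FirstOrder.Language} [L.IsRelational] (memRel : L.Relations 2)

/-- `w y ∈ dom (w g)`. -/
def fDomMem {n : ℕ} (i f : Fin n) : L.BoundedFormula Empty n :=
  fEx (fPairMem memRel i.castSucc (Fin.last n) f.castSucc)

/-- The domain of `w g` is contained in every transitive set containing `w y`. -/
def fDomMin {n : ℕ} (y g : Fin n) : L.BoundedFormula Empty n :=
  ((fAnd (fTransSet memRel (Fin.last n)) (fMem memRel y.castSucc (Fin.last n))).imp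
    (((fDomMem memRel (Fin.last (n + 1)) g.castSucc.castSucc).imp
      (fMem memRel (Fin.last (n + 1)) ((Fin.last n).castSucc))).all)).all

/-- `w g` is the canonical rank attempt for `w y`, i.e. `w g = attf (w y)`. -/
def fPhi {n : ℕ} (y g : Fin n) : L.BoundedFormula Empty n :=
  fAnd (fIsAtt memRel g) (fAnd (fDomMem memRel y g) (fDomMin memRel y g))

/-- `w s = insert (w t) (w t)`. -/
def fSuccEq {n : ℕ} (s t : Fin n) : L.BoundedFormula Empty n :=
  (fIff (fMem memRel (Fin.last n) s.castSucc)
    (fOr (fMem memRel (Fin.last n) t.castSucc) (fEq (Fin.last n) t.castSucc))).all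

/-- `w s = insert (oR (w y)) (oR (w y))`. -/
def fP2 {n : ℕ} (y s : Fin n) : L.BoundedFormula Empty n :=
  fEx (fAnd (fPhi memRel y.castSucc (Fin.last n))
    (fEx (fAnd
      (fPairMem memRel y.castSucc.castSucc (Fin.last (n + 1)) ((Fin.last n).castSucc))
      (fSuccEq memRel s.castSucc.castSucc (Fin.last (n + 1))))))

variable {memRel}
variable {A : VModel L}

theorem char_domMem (hT : TransClass A.carrier) (hMC : MemCorrect memRel A) (hUp : UpCl A)
    {n : ℕ} {w : Fin n → ZFSet.{0}} (hw : ∀ i, w i ∈ A.carrier) (i f : Fin n) :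
    A.BRealize (fDomMem memRel i f) w ↔ ∃ v', ZFSet.pair (w i) v' ∈ w f := by
  rw [fDomMem, br_ex]
  constructor
  · rintro ⟨v', hv'A, h⟩
    rw [char_pairMem hT hMC hUp (snoc_mem_of hw hv'A)] at h
    simp only [Fin.snoc_last, Fin.snoc_castSucc] at h
    exact ⟨v', h⟩
  · rintro ⟨v', h⟩
    have hv'A : v' ∈ A.carrier := (pair_comp_mem hT (hT (hw f) h)).2
    refine ⟨v', hv'A, ?_⟩
    rw [char_pairMem hT hMC hUp (snoc_mem_of hw hv'A)]
    simp only [Fin.snoc_last, Fin.snoc_castSucc]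
    exact h

theorem char_domMin (hT : TransClass A.carrier) (hMC : MemCorrect memRel A) (hUp : UpCl A)
    {n : ℕ} {w : Fin n → ZFSet.{0}} (hw : ∀ i, w i ∈ A.carrier) (y g : Fin n) :
    A.BRealize (fDomMin memRel y g) w ↔
      ∀ e ∈ A.carrier, e.IsTransitive → w y ∈ e →
        ∀ u v', ZFSet.pair u v' ∈ w g → u ∈ e := by
  rw [fDomMin, br_all]
  constructor
  · intro h e heA htr hye u v' hp
    have huA : u ∈ A.carrier := (pair_comp_mem hT (hT (hw g) hp)).1
    have h2 := h e heA
    rw [br_imp, br_and, char_transSet hT hMC (snoc_mem_of hw heA),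
      br_mem' hMC (snoc_mem_of hw heA), br_all] at h2
    simp only [Fin.snoc_last, Fin.snoc_castSucc] at h2
    have h3 := h2 ⟨htr, hye⟩ u huA
    rw [br_imp, char_domMem hT hMC hUp (snoc_mem_of (snoc_mem_of hw heA) huA),
      br_mem' hMC (snoc_mem_of (snoc_mem_of hw heA) huA)] at h3
    simp only [Fin.snoc_last, Fin.snoc_castSucc] at h3
    exact h3 ⟨v', hp⟩
  · intro h e heA
    rw [br_imp, br_and, char_transSet hT hMC (snoc_mem_of hw heA),
      br_mem' hMC (snoc_mem_of hw heA), br_all]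
    simp only [Fin.snoc_last, Fin.snoc_castSucc]
    rintro ⟨htr, hye⟩ u huA
    rw [br_imp, char_domMem hT hMC hUp (snoc_mem_of (snoc_mem_of hw heA) huA),
      br_mem' hMC (snoc_mem_of (snoc_mem_of hw heA) huA)]
    simp only [Fin.snoc_last, Fin.snoc_castSucc]
    rintro ⟨v', hp⟩
    exact h e heA htr hye u v' hp

theorem tcx_isTransitive (x : ZFSet.{0}) : (tcx x).IsTransitive :=
  fun _ hy _ hz => tcx_transitive hy hz

theorem char_phi (hT : TransClass A.carrier) (hMC : MemCorrect memRel A) (hUp : UpCl A)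
    {n : ℕ} {w : Fin n → ZFSet.{0}} (hw : ∀ i, w i ∈ A.carrier) (y g : Fin n)
    (htc : tcx (w y) ∈ A.carrier) :
    A.BRealize (fPhi memRel y g) w ↔ w g = attf (w y) := by
  rw [fPhi, br_and, br_and, char_isAtt hT hMC hUp hw, char_domMem hT hMC hUp hw,
    char_domMin hT hMC hUp hw]
  constructor
  · rintro ⟨hatt, ⟨v₀, hv₀⟩, hmin⟩
    -- the domain of `w g` is exactly `tcx (w y)`
    have hdom1 : ∀ u v', ZFSet.pair u v' ∈ w g → u ∈ tcx (w y) :=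
      hmin (tcx (w y)) htc (tcx_isTransitive _) (self_mem_tcx _)
    have hdom2 : ∀ u ∈ tcx (w y), ∃ v', ZFSet.pair u v' ∈ w g := by
      have := tcx_min (T := {u | ∃ v', ZFSet.pair u v' ∈ w g}) ?_ ⟨v₀, hv₀⟩
      · exact fun u hu => this u hu
      · rintro a ⟨v', hv'⟩ b hb
        exact hatt.2.2.1 a v' hv' b hb
    apply ZFSet.ext
    intro p
    rw [mem_attf]
    constructor
    · intro hp
      obtain ⟨u, v', rfl⟩ := hatt.1 p hp
      have hu := hdom1 u v' hp
      rw [hatt.val_eq hp]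
      exact ⟨u, hu, rfl⟩
    · rintro ⟨u, hu, rfl⟩
      obtain ⟨v', hv'⟩ := hdom2 u hu
      rw [← hatt.val_eq hv']
      exact hv'
  · intro hg
    rw [hg]
    refine ⟨isAtt_attf _, ⟨oR (w y), pair_mem_attf_self _⟩, ?_⟩
    intro e _ htr hye u v' hp
    obtain ⟨u', hu', hp'⟩ := mem_attf.1 hp
    obtain ⟨rfl, rfl⟩ := ZFSet.pair_injective hp'
    exact tcx_min (fun a ha b hb => htr a ha hb) hye u hu'

theorem char_succEq (hT : TransClass A.carrier) (hMC : MemCorrect memRel A)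
    {n : ℕ} {w : Fin n → ZFSet.{0}} (hw : ∀ i, w i ∈ A.carrier) (s t : Fin n) :
    A.BRealize (fSuccEq memRel s t) w ↔ w s = insert (w t) (w t) := by
  rw [fSuccEq, br_all]
  constructor
  · intro h
    apply ZFSet.ext
    intro u
    rw [ZFSet.mem_insert_iff]
    constructor
    · intro hu
      have huA : u ∈ A.carrier := hT (hw s) hu
      have h2 := h u huA
      rw [br_iff, br_mem' hMC (snoc_mem_of hw huA), br_or,
        br_mem' hMC (snoc_mem_of hw huA), br_eq] at h2
      simp only [Fin.snoc_last, Fin.snoc_castSucc] at h2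
      exact (h2.1 hu).symm.imp (fun h => h) (fun h => h)
    · intro hu
      have huA : u ∈ A.carrier := by
        rcases hu with rfl | hu
        · exact hw t
        · exact hT (hw t) hu
      have h2 := h u huA
      rw [br_iff, br_mem' hMC (snoc_mem_of hw huA), br_or,
        br_mem' hMC (snoc_mem_of hw huA), br_eq] at h2
      simp only [Fin.snoc_last, Fin.snoc_castSucc] at h2
      exact h2.2 (hu.symm.imp (fun h => h) (fun h => h))
  · intro hs u huA
    rw [br_iff, br_mem' hMC (snoc_mem_of hw huA), br_or,
      br_mem' hMC (snoc_mem_of hw huA), br_eq]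
    simp only [Fin.snoc_last, Fin.snoc_castSucc, hs, ZFSet.mem_insert_iff]
    tauto

theorem oR_mem_of_attf (hT : TransClass A.carrier) {x : ZFSet.{0}}
    (h : attf x ∈ A.carrier) : oR x ∈ A.carrier :=
  (pair_comp_mem hT (hT h (pair_mem_attf_self x))).2

theorem char_P2 (hT : TransClass A.carrier) (hMC : MemCorrect memRel A) (hUp : UpCl A)
    {n : ℕ} {w : Fin n → ZFSet.{0}} (hw : ∀ i, w i ∈ A.carrier) (y s : Fin n)
    (htc : tcx (w y) ∈ A.carrier) (hat : attf (w y) ∈ A.carrier) :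
    A.BRealize (fP2 memRel y s) w ↔ w s = insert (oR (w y)) (oR (w y)) := by
  rw [fP2, br_ex]
  constructor
  · rintro ⟨g, hgA, h⟩
    rw [br_and, char_phi hT hMC hUp (snoc_mem_of hw hgA)] at h
    · obtain ⟨h1, h2⟩ := h
      simp only [Fin.snoc_last, Fin.snoc_castSucc] at h1
      rw [br_ex] at h2
      obtain ⟨v', hv'A, h3⟩ := h2
      rw [br_and, char_pairMem hT hMC hUp (snoc_mem_of (snoc_mem_of hw hgA) hv'A),
        char_succEq hT hMC (snoc_mem_of (snoc_mem_of hw hgA) hv'A)] at h3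
      simp only [Fin.snoc_last, Fin.snoc_castSucc] at h3
      obtain ⟨h4, h5⟩ := h3
      rw [h1] at h4
      have := (isAtt_attf (w y)).val_eq h4
      rw [h5, this]
    · simp only [Fin.snoc_castSucc]
      exact htc
  · intro h
    refine ⟨attf (w y), hat, ?_⟩
    rw [br_and, char_phi hT hMC hUp (snoc_mem_of hw hat)]
    · constructor
      · simp only [Fin.snoc_last, Fin.snoc_castSucc]
      · rw [br_ex]
        have hoRA : oR (w y) ∈ A.carrier := oR_mem_of_attf hT hat
        refine ⟨oR (w y), hoRA, ?_⟩
        rw [br_and, char_pairMem hT hMC hUp (snoc_mem_of (snoc_mem_of hw hat) hoRA),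
          char_succEq hT hMC (snoc_mem_of (snoc_mem_of hw hat) hoRA)]
        simp only [Fin.snoc_last, Fin.snoc_castSucc]
        exact ⟨pair_mem_attf_self _, h⟩
    · simp only [Fin.snoc_castSucc]
      exact htc

end Closure


section ClosureMain

set_option linter.unusedSectionVars false

variable {L : FirstOrder.Language} [L.IsRelational] {memRel : L.Relations 2}
variable {A : VModel L}

theorem snoc2_eq (x' g' : ZFSet.{0}) :
    (Fin.snoc (Fin.snoc (Fin.elim0 : Fin 0 → ZFSet.{0}) x') g' : Fin 2 → ZFSet.{0}) =
      ![x', g'] := by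
  funext i
  fin_cases i <;> simp [Fin.snoc]

theorem snoc1_eq (p : ZFSet.{0}) (u : ZFSet.{0}) :
    (Fin.snoc (fun _ : Fin 1 => p) u : Fin 2 → ZFSet.{0}) = ![p, u] := by
  funext i
  fin_cases i <;> simp [Fin.snoc]

theorem matrix2_mem {x' g' : ZFSet.{0}} (h1 : x' ∈ A.carrier) (h2 : g' ∈ A.carrier) :
    ∀ i : Fin 2, (![x', g'] : Fin 2 → ZFSet.{0}) i ∈ A.carrier := by
  intro i
  fin_cases i <;> simpa

theorem insert_mem_of (hT : TransClass A.carrier) (hUp : UpCl A)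
    (hUn : ∀ x ∈ A.carrier, ZFSet.sUnion x ∈ A.carrier)
    {a S : ZFSet.{0}} (ha : a ∈ A.carrier) (hS : S ∈ A.carrier) :
    insert a S ∈ A.carrier := by
  have h1 : ({a} : ZFSet.{0}) ∈ A.carrier := sing_mem_of hUp a ha
  have h2 : ({S, {a}} : ZFSet.{0}) ∈ A.carrier := hUp _ _ hS h1
  have h3 := hUn _ h2
  have he : ZFSet.sUnion ({S, {a}} : ZFSet.{0}) = insert a S := by
    apply ZFSet.ext; intro t
    rw [ZFSet.mem_sUnion, ZFSet.mem_insert_iff]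
    constructor
    · rintro ⟨z, hz, htz⟩
      rcases ZFSet.mem_pair.1 hz with rfl | rfl
      · exact Or.inr htz
      · exact Or.inl (ZFSet.mem_singleton.1 htz)
    · rintro (rfl | ht)
      · exact ⟨{t}, ZFSet.mem_pair.2 (Or.inr rfl), ZFSet.mem_singleton.2 rfl⟩
      · exact ⟨S, ZFSet.mem_pair.2 (Or.inl rfl), ht⟩
  rwa [he] at h3

/-- Admissible structures contain all canonical rank attempts and transitive closures. -/
theorem adm_closure (hA : Admissible memRel A) :
    ∀ x ∈ A.carrier, attf x ∈ A.carrier ∧ tcx x ∈ A.carrier := by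
  obtain ⟨hT, -, hMC, hZ⟩ := hA
  have hUp : UpCl A := fun x y hx hy => hZ.2.1 x hx y hy
  have hUn := hZ.2.2.1
  have hSep := hZ.2.2.2.2.2.1
  have hRep := hZ.2.2.2.2.2.2.1
  intro x
  induction x using ZFSet.inductionOn with
  | h x ih =>
    intro hx
    have hxsub : ∀ y ∈ x, y ∈ A.carrier := fun y hy => hT hx hy
    have p0 : ∀ i : Fin 0, (Fin.elim0 i : ZFSet.{0}) ∈ A.carrier := fun i => i.elim0
    -- First replacement: B = { attf y | y ∈ x }
    have hfun1 : ∀ x' ∈ x.toSet, ∃! g', g' ∈ A.carrier ∧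
        A.BRealize (fPhi memRel (0 : Fin 2) (1 : Fin 2))
          (Fin.snoc (Fin.snoc Fin.elim0 x') g') := by
      intro x' hx'
      have hx'A : x' ∈ A.carrier := hxsub x' hx'
      have hattfA : attf x' ∈ A.carrier := (ih x' hx' hx'A).1
      have htcA : tcx x' ∈ A.carrier := (ih x' hx' hx'A).2
      refine ⟨attf x', ⟨hattfA, ?_⟩, ?_⟩
      · rw [snoc2_eq, char_phi hT hMC hUp (matrix2_mem hx'A hattfA)]
        · simp
        · simpa using htcA
      · rintro g' ⟨hg'A, hg'⟩
        rw [snoc2_eq, char_phi hT hMC hUp (matrix2_mem hx'A hg'A)] at hg'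
        · simpa using hg'
        · simpa using htcA
    obtain ⟨B, hBA, hB⟩ := hRep 0 (fPhi memRel 0 1) Fin.elim0 p0 x hx hfun1
    have hBattf : ∀ y', y' ∈ B ↔ ∃ y ∈ x, y' = attf y := by
      intro y'
      rw [hB y']
      constructor
      · rintro ⟨y, hy, hreal⟩
        have hy'A : y' ∈ A.carrier := hT hBA ((hB y').2 ⟨y, hy, hreal⟩)
        have hyA : y ∈ A.carrier := hxsub y hy
        rw [snoc2_eq, char_phi hT hMC hUp (matrix2_mem hyA hy'A)] at hreal
        · exact ⟨y, hy, by simpa using hreal⟩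
        · simpa using (ih y hy hyA).2
      · rintro ⟨y, hy, rfl⟩
        have hyA : y ∈ A.carrier := hxsub y hy
        refine ⟨y, hy, ?_⟩
        rw [snoc2_eq, char_phi hT hMC hUp (matrix2_mem hyA (ih y hy hyA).1)]
        · simp
        · simpa using (ih y hy hyA).2
    -- Second replacement: C = { succ (oR y) | y ∈ x }
    have hfun2 : ∀ x' ∈ x.toSet, ∃! s, s ∈ A.carrier ∧
        A.BRealize (fP2 memRel (0 : Fin 2) (1 : Fin 2))
          (Fin.snoc (Fin.snoc Fin.elim0 x') s) := by
      intro x' hx'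
      have hx'A : x' ∈ A.carrier := hxsub x' hx'
      have hattfA : attf x' ∈ A.carrier := (ih x' hx' hx'A).1
      have htcA : tcx x' ∈ A.carrier := (ih x' hx' hx'A).2
      have hoRA : oR x' ∈ A.carrier := oR_mem_of_attf hT hattfA
      have hsA : insert (oR x') (oR x') ∈ A.carrier := insert_mem_of hT hUp hUn hoRA hoRA
      refine ⟨insert (oR x') (oR x'), ⟨hsA, ?_⟩, ?_⟩
      · rw [snoc2_eq, char_P2 hT hMC hUp (matrix2_mem hx'A hsA)]
        · simp
        · simpa using htcA
        · simpa using hattfA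
      · rintro s ⟨hsA', hs⟩
        rw [snoc2_eq, char_P2 hT hMC hUp (matrix2_mem hx'A hsA')] at hs
        · simpa using hs
        · simpa using htcA
        · simpa using hattfA
    obtain ⟨C, hCA, hC⟩ := hRep 0 (fP2 memRel 0 1) Fin.elim0 p0 x hx hfun2
    have hCsucc : ∀ s, s ∈ C ↔ ∃ y ∈ x, s = insert (oR y) (oR y) := by
      intro s
      rw [hC s]
      constructor
      · rintro ⟨y, hy, hreal⟩
        have hsA : s ∈ A.carrier := hT hCA ((hC s).2 ⟨y, hy, hreal⟩)
        have hyA : y ∈ A.carrier := hxsub y hy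
        rw [snoc2_eq, char_P2 hT hMC hUp (matrix2_mem hyA hsA)] at hreal
        · exact ⟨y, hy, by simpa using hreal⟩
        · simpa using (ih y hy hyA).2
        · simpa using (ih y hy hyA).1
      · rintro ⟨y, hy, rfl⟩
        have hyA : y ∈ A.carrier := hxsub y hy
        have hoRA : oR y ∈ A.carrier := oR_mem_of_attf hT (ih y hy hyA).1
        refine ⟨y, hy, ?_⟩
        rw [snoc2_eq, char_P2 hT hMC hUp
          (matrix2_mem hyA (insert_mem_of hT hUp hUn hoRA hoRA))]
        · simp
        · simpa using (ih y hy hyA).2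
        · simpa using (ih y hy hyA).1
    have hoRx : oR x = ZFSet.sUnion C := by
      apply ZFSet.ext
      intro t
      rw [ZFSet.mem_sUnion, mem_oR]
      constructor
      · rintro ⟨y, hy, ht⟩
        refine ⟨insert (oR y) (oR y), (hCsucc _).2 ⟨y, hy, rfl⟩, ?_⟩
        rw [ZFSet.mem_insert_iff]
        exact ht
      · rintro ⟨z, hz, ht⟩
        obtain ⟨y, hy, rfl⟩ := (hCsucc z).1 hz
        rw [ZFSet.mem_insert_iff] at ht
        exact ⟨y, hy, ht⟩
    have hoRxA : oR x ∈ A.carrier := by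
      rw [hoRx]; exact hUn C hCA
    have hpairxA : ZFSet.pair x (oR x) ∈ A.carrier := pairK_mem_of hUp hx hoRxA
    have himg : (ZFSet.image attf x : ZFSet.{0}) = B := by
      apply ZFSet.ext
      intro z
      rw [ZFSet.mem_image, hBattf]
      constructor
      · rintro ⟨y, hy, rfl⟩; exact ⟨y, hy, rfl⟩
      · rintro ⟨y, hy, rfl⟩; exact ⟨y, hy, rfl⟩
    have hattxA : attf x ∈ A.carrier := by
      rw [attf_ext, himg]
      exact insert_mem_of hT hUp hUn hpairxA (hUn B hBA)
    -- tcx x via separation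
    have haux : ZFSet.sUnion (ZFSet.sUnion (attf x)) ∈ A.carrier :=
      hUn _ (hUn _ hattxA)
    have hsep := hSep 1 (fDomMem memRel (1 : Fin 2) (0 : Fin 2)) (fun _ => attf x)
      (fun _ => hattxA) _ haux
    have htcx_eq : ZFSet.sep
        (fun u => A.BRealize (fDomMem memRel (1 : Fin 2) (0 : Fin 2))
          (Fin.snoc (fun _ => attf x) u))
        (ZFSet.sUnion (ZFSet.sUnion (attf x))) = tcx x := by
      apply ZFSet.ext
      intro u
      rw [ZFSet.mem_sep]
      constructor
      · rintro ⟨hu1, hu2⟩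
        have huA : u ∈ A.carrier := hT haux hu1
        rw [snoc1_eq, char_domMem hT hMC hUp (matrix2_mem hattxA huA)] at hu2
        simp only [Matrix.cons_val_zero, Matrix.cons_val_one, Matrix.head_cons] at hu2
        obtain ⟨v', hv'⟩ := hu2
        obtain ⟨y, hy, hp⟩ := mem_attf.1 hv'
        obtain ⟨rfl, rfl⟩ := ZFSet.pair_injective hp
        exact hy
      · intro hu
        have hv' : ZFSet.pair u (oR u) ∈ attf x := mem_attf.2 ⟨u, hu, rfl⟩
        have hu1 : u ∈ ZFSet.sUnion (ZFSet.sUnion (attf x)) := by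
          rw [ZFSet.mem_sUnion]
          refine ⟨{u}, ?_, ZFSet.mem_singleton.2 rfl⟩
          rw [ZFSet.mem_sUnion]
          exact ⟨ZFSet.pair u (oR u), hv', ZFSet.mem_pair.2 (Or.inl rfl)⟩
        have huA : u ∈ A.carrier := hT haux hu1
        refine ⟨hu1, ?_⟩
        rw [snoc1_eq, char_domMem hT hMC hUp (matrix2_mem hattxA huA)]
        simp only [Matrix.cons_val_zero, Matrix.cons_val_one, Matrix.head_cons]
        exact ⟨oR u, hv'⟩
    rw [htcx_eq] at hsep
    exact ⟨hattxA, hsep⟩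

theorem adm_oR_mem (hA : Admissible memRel A) {x : ZFSet.{0}} (hx : x ∈ A.carrier) :
    oR x ∈ A.carrier :=
  oR_mem_of_attf hA.1 (adm_closure hA x hx).1

end ClosureMain


/-! ### Internal rank comparison formulas -/

section RankFormulas

set_option linter.unusedSectionVars false

variable {L : FirstOrder.Language} [L.IsRelational] (memRel : L.Relations 2)

/-- `oR (w i) ⊆ w j`, i.e. `rank (w i) ≤ w j` as an ordinal. -/
def fRankLe {n : ℕ} (i j : Fin n) : L.BoundedFormula Empty n :=
  fEx (fAnd (fIsAtt memRel (Fin.last n))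
    (fEx (fAnd
      (fPairMem memRel i.castSucc.castSucc (Fin.last (n + 1)) ((Fin.last n).castSucc))
      (fSub memRel (Fin.last (n + 1)) j.castSucc.castSucc))))

/-- `w c = oR (w i)`. -/
def fRankEq {n : ℕ} (i c : Fin n) : L.BoundedFormula Empty n :=
  fEx (fAnd (fIsAtt memRel (Fin.last n))
    (fPairMem memRel i.castSucc c.castSucc (Fin.last n)))

/-- `w i` is a value of `oR`. -/
def fOrdVal {n : ℕ} (i : Fin n) : L.BoundedFormula Empty n :=
  fEx (fEx (fAnd (fIsAtt memRel (Fin.last (n + 1)))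
    (fPairMem memRel ((Fin.last n).castSucc) i.castSucc.castSucc (Fin.last (n + 1)))))

variable {memRel}
variable {A : VModel L}

theorem char_rankLe (hA : Admissible memRel A)
    {n : ℕ} {w : Fin n → ZFSet.{0}} (hw : ∀ i, w i ∈ A.carrier) (i j : Fin n) :
    A.BRealize (fRankLe memRel i j) w ↔ oR (w i) ⊆ w j := by
  have hT := hA.1
  have hMC := hA.2.2.1
  have hUp : UpCl A := fun x y hx hy => hA.2.2.2.2.1 x hx y hy
  rw [fRankLe, br_ex]
  constructor
  · rintro ⟨f, hfA, h⟩
    rw [br_and, char_isAtt hT hMC hUp (snoc_mem_of hw hfA), br_ex] at h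
    simp only [Fin.snoc_last, Fin.snoc_castSucc] at h
    obtain ⟨hatt, v', hv'A, h2⟩ := h
    rw [br_and, char_pairMem hT hMC hUp (snoc_mem_of (snoc_mem_of hw hfA) hv'A),
      char_sub hT hMC (snoc_mem_of (snoc_mem_of hw hfA) hv'A)] at h2
    simp only [Fin.snoc_last, Fin.snoc_castSucc] at h2
    obtain ⟨hp, hsub⟩ := h2
    rwa [← hatt.val_eq hp]
  · intro h
    have hfA : attf (w i) ∈ A.carrier := (adm_closure hA _ (hw i)).1
    have hoRA : oR (w i) ∈ A.carrier := oR_mem_of_attf hT hfA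
    refine ⟨attf (w i), hfA, ?_⟩
    rw [br_and, char_isAtt hT hMC hUp (snoc_mem_of hw hfA), br_ex]
    simp only [Fin.snoc_last, Fin.snoc_castSucc]
    refine ⟨isAtt_attf _, oR (w i), hoRA, ?_⟩
    rw [br_and, char_pairMem hT hMC hUp (snoc_mem_of (snoc_mem_of hw hfA) hoRA),
      char_sub hT hMC (snoc_mem_of (snoc_mem_of hw hfA) hoRA)]
    simp only [Fin.snoc_last, Fin.snoc_castSucc]
    exact ⟨pair_mem_attf_self _, h⟩

theorem char_rankEq (hA : Admissible memRel A)
    {n : ℕ} {w : Fin n → ZFSet.{0}} (hw : ∀ i, w i ∈ A.carrier) (i c : Fin n) :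
    A.BRealize (fRankEq memRel i c) w ↔ w c = oR (w i) := by
  have hT := hA.1
  have hMC := hA.2.2.1
  have hUp : UpCl A := fun x y hx hy => hA.2.2.2.2.1 x hx y hy
  rw [fRankEq, br_ex]
  constructor
  · rintro ⟨f, hfA, h⟩
    rw [br_and, char_isAtt hT hMC hUp (snoc_mem_of hw hfA),
      char_pairMem hT hMC hUp (snoc_mem_of hw hfA)] at h
    simp only [Fin.snoc_last, Fin.snoc_castSucc] at h
    exact h.1.val_eq h.2
  · intro h
    have hfA : attf (w i) ∈ A.carrier := (adm_closure hA _ (hw i)).1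
    refine ⟨attf (w i), hfA, ?_⟩
    rw [br_and, char_isAtt hT hMC hUp (snoc_mem_of hw hfA),
      char_pairMem hT hMC hUp (snoc_mem_of hw hfA)]
    simp only [Fin.snoc_last, Fin.snoc_castSucc]
    refine ⟨isAtt_attf _, ?_⟩
    rw [h]
    exact pair_mem_attf_self _

theorem char_ordVal (hA : Admissible memRel A)
    {n : ℕ} {w : Fin n → ZFSet.{0}} (hw : ∀ i, w i ∈ A.carrier) (i : Fin n) :
    A.BRealize (fOrdVal memRel i) w ↔ ∃ t, t ∈ A.carrier ∧ w i = oR t := by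
  have hT := hA.1
  have hMC := hA.2.2.1
  have hUp : UpCl A := fun x y hx hy => hA.2.2.2.2.1 x hx y hy
  rw [fOrdVal, br_ex]
  constructor
  · rintro ⟨t, htA, h⟩
    rw [br_ex] at h
    obtain ⟨f, hfA, h2⟩ := h
    rw [br_and, char_isAtt hT hMC hUp (snoc_mem_of (snoc_mem_of hw htA) hfA),
      char_pairMem hT hMC hUp (snoc_mem_of (snoc_mem_of hw htA) hfA)] at h2
    simp only [Fin.snoc_last, Fin.snoc_castSucc] at h2
    exact ⟨t, htA, h2.1.val_eq h2.2⟩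
  · rintro ⟨t, htA, h⟩
    have hfA : attf t ∈ A.carrier := (adm_closure hA _ htA).1
    refine ⟨t, htA, ?_⟩
    rw [br_ex]
    refine ⟨attf t, hfA, ?_⟩
    rw [br_and, char_isAtt hT hMC hUp (snoc_mem_of (snoc_mem_of hw htA) hfA),
      char_pairMem hT hMC hUp (snoc_mem_of (snoc_mem_of hw htA) hfA)]
    simp only [Fin.snoc_last, Fin.snoc_castSucc]
    refine ⟨isAtt_attf _, ?_⟩
    rw [h]
    exact pair_mem_attf_self _

end RankFormulas


/-! ### The least-witness-rank formula machinery -/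

section Chi

set_option linter.unusedSectionVars false

variable {L : FirstOrder.Language} [L.IsRelational] (memRel : L.Relations 2)

theorem tuple_insF_top {n : ℕ} (u : Fin (n + 1) → ZFSet.{0}) (x : ZFSet.{0}) :
    (fun i : Fin (n + 1) => (Fin.snoc u x : Fin (n + 2) → ZFSet.{0}) (insF (n + 1) i)) = u := by
  funext i
  rw [insF, if_pos i.isLt, Fin.snoc_castSucc]

theorem tuple_insF_mid {n : ℕ} (u : Fin (n + 1) → ZFSet.{0}) (x : ZFSet.{0}) :
    (fun i : Fin (n + 1) => (Fin.snoc u x : Fin (n + 2) → ZFSet.{0}) (insF n i)) =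
      (Fin.snoc (fun j : Fin n => u j.castSucc) x : Fin (n + 1) → ZFSet.{0}) := by
  funext i
  refine Fin.lastCases ?_ (fun j => ?_) i
  · rw [insF, if_neg (by simp), Fin.succ_last, Fin.snoc_last, Fin.snoc_last]
  · rw [insF, if_pos (by simpa using j.isLt), Fin.snoc_castSucc, Fin.snoc_castSucc]

theorem snoc_comp_castSucc {n : ℕ} (v : Fin n → ZFSet.{0}) (γ : ZFSet.{0}) :
    (fun j : Fin n => (Fin.snoc v γ : Fin (n + 1) → ZFSet.{0}) j.castSucc) = v := by
  funext j
  rw [Fin.snoc_castSucc]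

variable {M : VModel L}

theorem br_lift_mid {n : ℕ} (φ : L.BoundedFormula Empty (n + 1))
    (u : Fin (n + 1) → ZFSet.{0}) (x : ZFSet.{0}) :
    M.BRealize (lift1 n φ) (Fin.snoc u x) ↔
      M.BRealize φ (Fin.snoc (fun j : Fin n => u j.castSucc) x) := by
  rw [br_lift1 φ n (Nat.le_succ n), tuple_insF_mid]

theorem br_lift_top {n : ℕ} (φ : L.BoundedFormula Empty (n + 1))
    (u : Fin (n + 1) → ZFSet.{0}) (x : ZFSet.{0}) :
    M.BRealize (lift1 (n + 1) φ) (Fin.snoc u x) ↔ M.BRealize φ u := by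
  rw [br_lift1 φ (n + 1) (le_refl (n + 1)), tuple_insF_top]

theorem br_lift_swap {n : ℕ} (φ : L.BoundedFormula Empty (n + 1))
    (v : Fin n → ZFSet.{0}) (γ γ' : ZFSet.{0}) :
    M.BRealize (lift1 n φ) (Fin.snoc (Fin.snoc v γ) γ') ↔
      M.BRealize φ (Fin.snoc v γ') := by
  rw [br_lift_mid, snoc_comp_castSucc]

theorem br_lift_psi {n : ℕ} (ψ : L.BoundedFormula Empty (n + 1))
    (v : Fin n → ZFSet.{0}) (γ x : ZFSet.{0}) :
    M.BRealize (lift1 n ψ) (Fin.snoc (Fin.snoc v γ) x) ↔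
      M.BRealize ψ (Fin.snoc v x) := br_lift_swap ψ v γ x

theorem br_lift_psi2 {n : ℕ} (ψ : L.BoundedFormula Empty (n + 1))
    (v : Fin n → ZFSet.{0}) (γ δ x : ZFSet.{0}) :
    M.BRealize (lift1 n (lift1 n ψ)) (Fin.snoc (Fin.snoc (Fin.snoc v γ) δ) x) ↔
      M.BRealize ψ (Fin.snoc v x) := by
  rw [br_lift1 (lift1 n ψ) n (by omega)]
  have he : (fun i : Fin (n + 2) =>
      (Fin.snoc (Fin.snoc (Fin.snoc v γ) δ) x : Fin (n + 3) → ZFSet.{0}) (insF n i)) =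
      (Fin.snoc (Fin.snoc v δ) x : Fin (n + 2) → ZFSet.{0}) := by
    funext i
    refine Fin.lastCases ?_ (fun j => ?_) i
    · rw [insF, if_neg (by simp), Fin.succ_last]
      simp only [Fin.snoc_last]
    · refine Fin.lastCases ?_ (fun k => ?_) j
      · rw [insF, if_neg (by simp), Fin.succ_castSucc, Fin.succ_last]
        simp only [Fin.snoc_castSucc, Fin.snoc_last]
      · rw [insF, if_pos (by simpa using k.isLt)]
        simp only [Fin.snoc_castSucc]
  rw [he, br_lift_psi]

/-- `w γ` (the last variable) is a least ordinal bounding the rank of some witness of `ψ`. -/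
def fWit {n : ℕ} (ψ : L.BoundedFormula Empty (n + 1)) : L.BoundedFormula Empty (n + 1) :=
  fEx (fAnd (lift1 n ψ) (fRankLe memRel (Fin.last (n + 1)) ((Fin.last n).castSucc)))

def fWit2 {n : ℕ} (ψ : L.BoundedFormula Empty (n + 1)) : L.BoundedFormula Empty (n + 2) :=
  fEx (fAnd (lift1 n (lift1 n ψ)) (fRankLe memRel (Fin.last (n + 2)) ((Fin.last (n + 1)).castSucc)))

def fChi {n : ℕ} (ψ : L.BoundedFormula Empty (n + 1)) : L.BoundedFormula Empty (n + 1) :=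
  fAnd (fOrdVal memRel (Fin.last n))
    (fAnd (fWit memRel ψ)
      (((fMem memRel (Fin.last (n + 1)) ((Fin.last n).castSucc)).imp
        (fNot (fWit2 memRel ψ))).all))

def fTheta {n : ℕ} (ψ : L.BoundedFormula Empty (n + 1)) : L.BoundedFormula Empty n :=
  fEx (fChi memRel ψ)

def fUniq {n : ℕ} (ψ : L.BoundedFormula Empty (n + 1)) : L.BoundedFormula Empty n :=
  (((fAnd (lift1 (n + 1) (fChi memRel ψ)) (lift1 n (fChi memRel ψ))).imp
    (fEq (Fin.last (n + 1)) ((Fin.last n).castSucc))).all).all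

/-- The meaning of `fChi` in `A`. -/
def chiP (A : VModel L) {n : ℕ} (ψ : L.BoundedFormula Empty (n + 1))
    (v : Fin n → ZFSet.{0}) (γ : ZFSet.{0}) : Prop :=
  (∃ t, t ∈ A.carrier ∧ γ = oR t) ∧
  (∃ y, y ∈ A.carrier ∧ A.BRealize ψ (Fin.snoc v y) ∧ oR y ⊆ γ) ∧
  (∀ δ, δ ∈ γ → ¬ ∃ y, y ∈ A.carrier ∧ A.BRealize ψ (Fin.snoc v y) ∧ oR y ⊆ δ)

variable {memRel}
variable {A : VModel L}

theorem char_wit (hA : Admissible memRel A) {n : ℕ} {ψ : L.BoundedFormula Empty (n + 1)}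
    {v : Fin n → ZFSet.{0}} (hv : ∀ i, v i ∈ A.carrier) {γ : ZFSet.{0}} (hγ : γ ∈ A.carrier) :
    A.BRealize (fWit memRel ψ) (Fin.snoc v γ) ↔
      ∃ y, y ∈ A.carrier ∧ A.BRealize ψ (Fin.snoc v y) ∧ oR y ⊆ γ := by
  rw [fWit, br_ex]
  constructor
  · rintro ⟨y, hyA, h⟩
    rw [br_and, br_lift_psi,
      char_rankLe hA (snoc_mem_of (snoc_mem_of hv hγ) hyA)] at h
    simp only [Fin.snoc_last, Fin.snoc_castSucc] at h
    exact ⟨y, hyA, h.1, h.2⟩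
  · rintro ⟨y, hyA, h1, h2⟩
    refine ⟨y, hyA, ?_⟩
    rw [br_and, br_lift_psi, char_rankLe hA (snoc_mem_of (snoc_mem_of hv hγ) hyA)]
    simp only [Fin.snoc_last, Fin.snoc_castSucc]
    exact ⟨h1, h2⟩

theorem char_wit2 (hA : Admissible memRel A) {n : ℕ} {ψ : L.BoundedFormula Empty (n + 1)}
    {v : Fin n → ZFSet.{0}} (hv : ∀ i, v i ∈ A.carrier) {γ δ : ZFSet.{0}}
    (hγ : γ ∈ A.carrier) (hδ : δ ∈ A.carrier) :
    A.BRealize (fWit2 memRel ψ) (Fin.snoc (Fin.snoc v γ) δ) ↔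
      ∃ y, y ∈ A.carrier ∧ A.BRealize ψ (Fin.snoc v y) ∧ oR y ⊆ δ := by
  rw [fWit2, br_ex]
  have hvv := snoc_mem_of (snoc_mem_of hv hγ) hδ
  constructor
  · rintro ⟨y, hyA, h⟩
    rw [br_and, br_lift_psi2, char_rankLe hA (snoc_mem_of hvv hyA)] at h
    simp only [Fin.snoc_last, Fin.snoc_castSucc] at h
    exact ⟨y, hyA, h.1, h.2⟩
  · rintro ⟨y, hyA, h1, h2⟩
    refine ⟨y, hyA, ?_⟩
    rw [br_and, br_lift_psi2, char_rankLe hA (snoc_mem_of hvv hyA)]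
    simp only [Fin.snoc_last, Fin.snoc_castSucc]
    exact ⟨h1, h2⟩

theorem char_chi (hA : Admissible memRel A) {n : ℕ} {ψ : L.BoundedFormula Empty (n + 1)}
    {v : Fin n → ZFSet.{0}} (hv : ∀ i, v i ∈ A.carrier) {γ : ZFSet.{0}} (hγ : γ ∈ A.carrier) :
    A.BRealize (fChi memRel ψ) (Fin.snoc v γ) ↔ chiP A ψ v γ := by
  have hT := hA.1
  have hMC := hA.2.2.1
  rw [fChi, br_and, br_and, char_wit hA hv hγ, br_all]
  have hord : A.BRealize (fOrdVal memRel (Fin.last n)) (Fin.snoc v γ) ↔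
      ∃ t, t ∈ A.carrier ∧ γ = oR t := by
    rw [char_ordVal hA (snoc_mem_of hv hγ)]
    simp only [Fin.snoc_last]
  rw [hord, chiP]
  have hminiff : (∀ δ ∈ A.carrier,
      A.BRealize ((fMem memRel (Fin.last (n + 1)) ((Fin.last n).castSucc)).imp
        (fNot (fWit2 memRel ψ))) (Fin.snoc (Fin.snoc v γ) δ)) ↔
      (∀ δ, δ ∈ γ → ¬ ∃ y, y ∈ A.carrier ∧ A.BRealize ψ (Fin.snoc v y) ∧ oR y ⊆ δ) := by
    constructor
    · intro h δ hδγ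
      have hδA : δ ∈ A.carrier := hT hγ hδγ
      have h2 := h δ hδA
      rw [br_imp, br_mem' hMC (snoc_mem_of (snoc_mem_of hv hγ) hδA), br_not,
        char_wit2 hA hv hγ hδA] at h2
      simp only [Fin.snoc_last, Fin.snoc_castSucc] at h2
      exact h2 hδγ
    · intro h δ hδA
      rw [br_imp, br_mem' hMC (snoc_mem_of (snoc_mem_of hv hγ) hδA), br_not,
        char_wit2 hA hv hγ hδA]
      simp only [Fin.snoc_last, Fin.snoc_castSucc]
      exact h δ
  rw [hminiff]

theorem chiP_unique {n : ℕ} {ψ : L.BoundedFormula Empty (n + 1)}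
    {v : Fin n → ZFSet.{0}} {γ γ' : ZFSet.{0}}
    (h1 : chiP A ψ v γ) (h2 : chiP A ψ v γ') : γ = γ' := by
  obtain ⟨⟨t, htA, rfl⟩, ⟨y, hy⟩, hmin⟩ := h1
  obtain ⟨⟨t', ht'A, rfl⟩, ⟨y', hy'⟩, hmin'⟩ := h2
  rcases lt_trichotomy (ZFSet.rank t) (ZFSet.rank t') with h | h | h
  · exact absurd ⟨y, hy.1, hy.2.1, hy.2.2⟩ (hmin' (oR t) (oR_mem_oR.2 h))
  · exact oR_eq_of_rank_eq h
  · exact absurd ⟨y', hy'.1, hy'.2.1, hy'.2.2⟩ (hmin (oR t') (oR_mem_oR.2 h))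

theorem uniq_apply {n : ℕ} {ψ : L.BoundedFormula Empty (n + 1)} {v : Fin n → ZFSet.{0}}
    (huniq : M.BRealize (fUniq memRel ψ) v) {γ γ' : ZFSet.{0}}
    (hγ : γ ∈ M.carrier) (hγ' : γ' ∈ M.carrier)
    (h1 : M.BRealize (fChi memRel ψ) (Fin.snoc v γ))
    (h2 : M.BRealize (fChi memRel ψ) (Fin.snoc v γ')) : γ' = γ := by
  rw [fUniq, br_all] at huniq
  have h3 := huniq γ hγ
  rw [br_all] at h3
  have h4 := h3 γ' hγ'
  rw [br_imp, br_and, br_lift_top, br_lift_swap, br_eq] at h4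
  have := h4 ⟨h1, h2⟩
  simpa only [Fin.snoc_last, Fin.snoc_castSucc] using this

theorem valid_uniq (hA : Admissible memRel A) {n : ℕ} {ψ : L.BoundedFormula Empty (n + 1)}
    {v : Fin n → ZFSet.{0}} (hv : ∀ i, v i ∈ A.carrier) :
    A.BRealize (fUniq memRel ψ) v := by
  rw [fUniq, br_all]
  intro γ hγ
  rw [br_all]
  intro γ' hγ'
  rw [br_imp, br_and, br_lift_top, br_lift_swap, br_eq]
  rintro ⟨h1, h2⟩
  have e := chiP_unique ((char_chi hA hv hγ).1 h1) ((char_chi hA hv hγ').1 h2)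
  simp only [Fin.snoc_last, Fin.snoc_castSucc]
  exact e.symm

end Chi

/-! ### The Tarski–Vaught witness lemma -/

theorem tv_witness {L : FirstOrder.Language} [L.IsRelational] {memRel : L.Relations 2}
    {M A H : VModel L} (hA : Admissible memRel A) (hMA : ElemSub M A) (hMH : ElemSub M H)
    {a : ZFSet.{0}} (hae : ElemSub (restrictTo H (Vclass (ZFSet.rank a))) H)
    {n : ℕ} (ψ : L.BoundedFormula Empty (n + 1)) (v : Fin n → ZFSet.{0})
    (hvM : ∀ i, v i ∈ M.carrier) (hvα : ∀ i, ZFSet.rank (v i) < ZFSet.rank a)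
    {x : ZFSet.{0}} (hx : x ∈ M.carrier) (hψ : M.BRealize ψ (Fin.snoc v x)) :
    ∃ x', x' ∈ M.carrier ∧ ZFSet.rank x' < ZFSet.rank a ∧
      M.BRealize ψ (Fin.snoc v x') := by
  have hT := hA.1
  have hvA : ∀ i, v i ∈ A.carrier := fun i => hMA.1 (hvM i)
  have hvH : ∀ i, v i ∈ H.carrier := fun i => hMH.1 (hvM i)
  have hxA : A.BRealize ψ (Fin.snoc v x) :=
    (hMA.2.2 ψ (Fin.snoc v x) (snoc_mem_of hvM hx)).1 hψ
  set S : Set Ordinal.{0} :=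
    {o | ∃ y, y ∈ A.carrier ∧ A.BRealize ψ (Fin.snoc v y) ∧ ZFSet.rank y = o} with hSdef
  have hS : S.Nonempty := ⟨ZFSet.rank x, x, hMA.1 hx, hxA, rfl⟩
  obtain ⟨x₁, hx₁A, hx₁ψ, hx₁r⟩ := Ordinal.lt_wf.min_mem S hS
  have hmin₀ : ∀ y, y ∈ A.carrier → A.BRealize ψ (Fin.snoc v y) →
      Ordinal.lt_wf.min S hS ≤ ZFSet.rank y := by
    intro y hyA hyψ
    by_contra hlt
    push_neg at hlt
    exact Ordinal.lt_wf.not_lt_min S (x := ZFSet.rank y) ⟨y, hyA, hyψ, rfl⟩ hlt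
  have hc₀A : oR x₁ ∈ A.carrier := adm_oR_mem hA hx₁A
  -- A satisfies χ at oR x₁
  have hchiA : A.BRealize (fChi memRel ψ) (Fin.snoc v (oR x₁)) := by
    rw [char_chi hA hvA hc₀A]
    refine ⟨⟨x₁, hx₁A, rfl⟩, ⟨x₁, hx₁A, hx₁ψ, fun t ht => ht⟩, ?_⟩
    rintro δ hδ ⟨y, hyA, hyψ, hsub⟩
    obtain ⟨p, rfl, hp⟩ := mem_oR'.1 hδ
    have hyp : ZFSet.rank y ≤ ZFSet.rank p := oR_subset_oR.1 hsub
    have h1 := hmin₀ y hyA hyψ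
    rw [hx₁r] at hp
    exact absurd (lt_of_le_of_lt (h1.trans hyp) hp) (lt_irrefl _)
  -- transfer to M
  have hthetaM : M.BRealize (fTheta memRel ψ) v := by
    refine (hMA.2.2 (fTheta memRel ψ) v hvM).2 ?_
    rw [fTheta, br_ex]
    exact ⟨oR x₁, hc₀A, hchiA⟩
  rw [fTheta, br_ex] at hthetaM
  obtain ⟨c, hcM, hchiM⟩ := hthetaM
  have hchiA' : A.BRealize (fChi memRel ψ) (Fin.snoc v c) :=
    (hMA.2.2 _ _ (snoc_mem_of hvM hcM)).1 hchiM
  have hceq : c = oR x₁ :=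
    chiP_unique ((char_chi hA hvA (hMA.1 hcM)).1 hchiA') ((char_chi hA hvA hc₀A).1 hchiA)
  rw [hceq] at hcM hchiM
  -- uniqueness transfers to H
  have huniqH : H.BRealize (fUniq memRel ψ) v :=
    (hMH.2.2 _ v hvM).1 ((hMA.2.2 _ v hvM).2 (valid_uniq hA hvA))
  have hchiH : H.BRealize (fChi memRel ψ) (Fin.snoc v (oR x₁)) :=
    (hMH.2.2 _ _ (snoc_mem_of hvM hcM)).1 hchiM
  -- reflect to the rank-initial segment of H
  have hvR : ∀ i, v i ∈ (restrictTo H (Vclass (ZFSet.rank a))).carrier :=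
    fun i => ⟨hvα i, hvH i⟩
  have hthetaH : H.BRealize (fTheta memRel ψ) v := by
    rw [fTheta, br_ex]
    exact ⟨oR x₁, hMH.1 hcM, hchiH⟩
  have hthetaR := (hae.2.2 (fTheta memRel ψ) v hvR).2 hthetaH
  rw [fTheta, br_ex] at hthetaR
  obtain ⟨c', hc'R, hchiR⟩ := hthetaR
  have hchiH' : H.BRealize (fChi memRel ψ) (Fin.snoc v c') :=
    (hae.2.2 _ _ (snoc_mem_of hvR hc'R)).1 hchiR
  have hc'eq : c' = oR x₁ := uniq_apply huniqH (hMH.1 hcM) hc'R.2 hchiH hchiH'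
  have hrank : ZFSet.rank (oR x₁) < ZFSet.rank a := by
    rw [← hc'eq]
    exact hc'R.1
  -- extract the witness in M
  rw [fChi] at hchiM
  have hwitM := (br_and.1 (br_and.1 hchiM).2).1
  rw [fWit, br_ex] at hwitM
  obtain ⟨x', hx'M, h⟩ := hwitM
  rw [br_and, br_lift_psi] at h
  have hrle : A.BRealize (fRankLe memRel (Fin.last (n + 1)) ((Fin.last n).castSucc))
      (Fin.snoc (Fin.snoc v (oR x₁)) x') :=
    (hMA.2.2 _ _ (snoc_mem_of (snoc_mem_of hvM hcM) hx'M)).1 h.2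
  rw [char_rankLe hA (snoc_mem_of (snoc_mem_of hvA hc₀A) (hMA.1 hx'M))] at hrle
  simp only [Fin.snoc_last, Fin.snoc_castSucc] at hrle
  have hle : ZFSet.rank x' ≤ ZFSet.rank x₁ := oR_subset_oR.1 hrle
  refine ⟨x', hx'M, ?_, h.1⟩
  calc ZFSet.rank x' ≤ ZFSet.rank x₁ := hle
    _ = ZFSet.rank (oR x₁) := (rank_oR x₁).symm
    _ < ZFSet.rank a := hrank


/-- If `M` is a virtual model, `α ∈ e_{M̂}`, and `β = min (M ∩ [α, ∞))`
exists, then `β ∈ e_M`. -/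
theorem statement_6 (L : FirstOrder.Language) [L.IsRelational] (memRel : L.Relations 2)
    (M H : VModel L) (hM : VirtualModel memRel M) (hH : IsHat M H)
    (a : ZFSet.{0}) (ha : a ∈ eSet H)
    (b : ZFSet.{0}) (hbM : b ∈ M.carrier) (hbord : b.IsOrdinal)
    (hab : ZFSet.rank a ≤ ZFSet.rank b)
    (hmin : ∀ c ∈ M.carrier, c.IsOrdinal → ZFSet.rank a ≤ ZFSet.rank c →
      ZFSet.rank b ≤ ZFSet.rank c) :
    b ∈ eSet M := by
  obtain ⟨A, hA, hMA⟩ := hM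
  obtain ⟨-, hMH⟩ := hH
  obtain ⟨haH, haOrd, hae⟩ := ha
  -- every element of M has its rank ordinal in M
  have hOrdRep : ∀ z ∈ M.carrier, oR z ∈ M.carrier := by
    intro z hz
    have hzA : z ∈ A.carrier := hMA.1 hz
    have e1 : ((0 : Fin 1).castSucc) = (0 : Fin 2) := rfl
    have e2 : Fin.last 1 = (1 : Fin 2) := rfl
    have hvz : ∀ i : Fin 1, (fun _ : Fin 1 => z) i ∈ M.carrier := fun _ => hz
    have hvzA : ∀ i : Fin 1, (fun _ : Fin 1 => z) i ∈ A.carrier := fun _ => hzA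
    have hex : A.BRealize (fEx (fRankEq memRel ((0 : Fin 1).castSucc) (Fin.last 1)))
        (fun _ : Fin 1 => z) := by
      rw [br_ex]
      refine ⟨oR z, adm_oR_mem hA hzA, ?_⟩
      rw [snoc1_eq, char_rankEq hA (matrix2_mem hzA (adm_oR_mem hA hzA)), e1, e2]
      simp only [Matrix.cons_val_zero, Matrix.cons_val_one, Matrix.head_cons]
    have hexM := (hMA.2.2 _ (fun _ : Fin 1 => z) hvz).2 hex
    rw [br_ex] at hexM
    obtain ⟨c, hcM, hc⟩ := hexM
    have hcA : A.BRealize (fRankEq memRel ((0 : Fin 1).castSucc) (Fin.last 1))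
        (Fin.snoc (fun _ : Fin 1 => z) c) :=
      (hMA.2.2 _ _ (snoc_mem_of hvz hcM)).1 hc
    rw [snoc1_eq, char_rankEq hA (matrix2_mem hzA (hMA.1 hcM)), e1, e2] at hcA
    simp only [Matrix.cons_val_zero, Matrix.cons_val_one, Matrix.head_cons] at hcA
    rwa [← hcA]
  -- elements of M of rank < rank b in fact have rank < rank a
  have hClaimA : ∀ z ∈ M.carrier, ZFSet.rank z < ZFSet.rank b →
      ZFSet.rank z < ZFSet.rank a := by
    intro z hz hzb
    by_contra hcon
    push_neg at hcon
    have h1 := hmin (oR z) (hOrdRep z hz) (isOrdinal_oR z) (by rwa [rank_oR])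
    rw [rank_oR] at h1
    exact absurd (lt_of_lt_of_le hzb h1) (lt_irrefl _)
  -- the main elementarity, by induction on formulas
  have main : ∀ (n : ℕ) (φ : L.BoundedFormula Empty n) (v : Fin n → ZFSet.{0}),
      (∀ i, v i ∈ Vclass (ZFSet.rank b) ∩ M.carrier) →
      ((restrictTo M (Vclass (ZFSet.rank b))).BRealize φ v ↔ M.BRealize φ v) := by
    intro n φ
    induction φ with
    | falsum => exact fun v hv => Iff.rfl
    | equal t u => exact fun v hv => Iff.rfl
    | rel R ts =>
      intro v hv
      show ((restrictTo M (Vclass (ZFSet.rank b))).rel R _) ↔ (M.rel R _)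
      constructor
      · exact fun h => h.1
      · exact fun h => ⟨h, fun i => interpTerm_mem hv (ts i)⟩
    | imp φ₁ φ₂ ih₁ ih₂ =>
      intro v hv
      exact imp_congr (ih₁ v hv) (ih₂ v hv)
    | all φ₁ ih =>
      intro v hv
      rw [br_all, br_all]
      constructor
      · intro h x hxM
        by_contra hnot
        have hvM : ∀ i, v i ∈ M.carrier := fun i => (hv i).2
        have hvα : ∀ i, ZFSet.rank (v i) < ZFSet.rank a :=
          fun i => hClaimA _ (hv i).2 (hv i).1
        obtain ⟨x', hx'M, hx'a, hx'ψ⟩ :=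
          tv_witness hA hMA hMH hae (fNot φ₁) v hvM hvα hxM (br_not.2 hnot)
        have hx'R : x' ∈ Vclass (ZFSet.rank b) ∩ M.carrier :=
          ⟨lt_of_lt_of_le hx'a hab, hx'M⟩
        have hres := h x' hx'R
        have hM1 := (ih (Fin.snoc v x') (snoc_mem_of hv hx'R)).1 hres
        exact br_not.1 hx'ψ hM1
      · intro h x hxR
        exact (ih (Fin.snoc v x) (snoc_mem_of hv hxR)).2 (h x hxR.2)
  refine ⟨hbM, hbord, ?_, ?_, ?_⟩
  · exact Set.inter_subset_right
  · intro n r v hv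
    exact ⟨fun h => h.1, fun h => ⟨h, hv⟩⟩
  · intro n φ v hv
    exact main n φ v hv


end VMF
end

section
/- Suppose θ > ω is regular, U is a stationary subset of [H_θ]^ω, and x ∈ H_θ. Then the set D := {p ∈ Col_U : there exists M ∈ M_p with x ∈ M} is dense in the poset Col_U. -/
set_option autoImplicit false

namespace NSF

/-- A class of sets is transitive. -/
def TransClass (S : Set ZFSet.{0}) : Prop := ∀ ⦃x⦄, x ∈ S → ∀ ⦃y⦄, y ∈ x → y ∈ S

/-- The transitive closure of a class: the least transitive class containing it. -/
def trclSet (S : Set ZFSet.{0}) : Set ZFSet.{0} :=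
  {x | ∀ T : Set ZFSet.{0}, S ⊆ T → TransClass T → x ∈ T}

/-- `H_θ`: the class of sets hereditarily of cardinality `< θ`. -/
def HSet (θ : Cardinal.{0}) : Set ZFSet.{0} :=
  {x | Cardinal.mk ↥(trclSet x.toSet) < Cardinal.lift.{1} θ}

/-- `f` is (extensionally) a function, as a set of Kuratowski pairs. -/
def IsZFun (f : ZFSet.{0}) : Prop :=
  (∀ p ∈ f.toSet, ∃ a b : ZFSet.{0}, p = a.pair b) ∧
    ∀ a b c : ZFSet.{0}, a.pair b ∈ f → a.pair c ∈ f → b = c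

/-- `δ_S`: the least ordinal that is not (the order type of) an ordinal member of `S`. -/
noncomputable def deltaOrd (S : Set ZFSet.{0}) : Ordinal.{0} :=
  sInf {o : Ordinal.{0} | ¬ ∃ x ∈ S, x.IsOrdinal ∧ ZFSet.rank x = o}

/-- `U` is a stationary subset of `[Hθ]^ω`: a collection of countable subsets of `Hθ`
meeting every club, i.e. for every `F : Hθ^{<ω} → Hθ` some `M ∈ U` is closed under `F`. -/
def StatInCountable (Hθ : Set ZFSet.{0}) (U : Set ZFSet.{0}) : Prop :=
  (∀ m ∈ U, m.toSet ⊆ Hθ ∧ m.toSet.Countable) ∧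
  ∀ F : List ZFSet.{0} → ZFSet.{0},
    (∀ l : List ZFSet.{0}, (∀ x ∈ l, x ∈ Hθ) → F l ∈ Hθ) →
    ∃ m ∈ U, ∀ l : List ZFSet.{0}, (∀ x ∈ l, x ∈ m) → F l ∈ m

/-- A condition of the collapsing poset `Col_U` guided by `U`, coded as a (Kuratowski)
pair `p = (M_p, d_p)`. -/
def IsCond (θ : Cardinal.{0}) (U : Set ZFSet.{0}) (p : ZFSet.{0}) : Prop :=
  ∃ a b : ZFSet.{0}, p = a.pair b ∧
    -- `M_p` is finite and consists of countable subsets of `H_θ`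
    a.toSet.Finite ∧
    (∀ m ∈ a.toSet, m.toSet ⊆ HSet θ ∧ m.toSet.Countable) ∧
    -- (i) each `M ∈ M_p` is in `U` or has no superset in `U` with the same `δ`
    (∀ m ∈ a.toSet,
      m ∈ U ∨ ¬ ∃ nn ∈ U, m.toSet ⊆ nn.toSet ∧ deltaOrd nn.toSet = deltaOrd m.toSet) ∧
    -- (ii) `M_p` is an `∈`-chain
    (∀ m ∈ a.toSet, ∀ m' ∈ a.toSet, m = m' ∨ m ∈ m' ∨ m' ∈ m) ∧
    -- (iii) `d_p : M_p → [H_θ]^{<ω}`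
    IsZFun b ∧ (∀ m : ZFSet.{0}, (∃ y : ZFSet.{0}, m.pair y ∈ b) ↔ m ∈ a) ∧
    (∀ m y : ZFSet.{0}, m.pair y ∈ b → y.toSet.Finite ∧ y.toSet ⊆ HSet θ) ∧
    -- (iv) if `M ∈ N` are both in `M_p` then `d_p(M) ⊆ N`
    (∀ m m' y : ZFSet.{0}, m ∈ a → m' ∈ a → m ∈ m' → m.pair y ∈ b → y.toSet ⊆ m'.toSet)

/-- The order of `Col_U`: `p ≤ q` iff `M_p ⊇ M_q` and `d_p(M) ⊇ d_q(M)` for `M ∈ M_q`. -/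
def CondLe (p q : ZFSet.{0}) : Prop :=
  ∃ ap bp aq bq : ZFSet.{0}, p = ap.pair bp ∧ q = aq.pair bq ∧
    aq.toSet ⊆ ap.toSet ∧
    ∀ m yq yp : ZFSet.{0}, m ∈ aq → m.pair yq ∈ bq → m.pair yp ∈ bp → yq.toSet ⊆ yp.toSet

/-- Compatibility in `Col_U`. -/
def Compat (θ : Cardinal.{0}) (U : Set ZFSet.{0}) (p q : ZFSet.{0}) : Prop :=
  ∃ r : ZFSet.{0}, IsCond θ U r ∧ CondLe r p ∧ CondLe r q

lemma subset_trclSet (S : Set ZFSet.{0}) : S ⊆ trclSet S := fun _ hx _ hST _ => hST hx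

lemma transClass_trclSet (S : Set ZFSet.{0}) : TransClass (trclSet S) :=
  fun _ hx _ hyx T hST hT => hT (hx T hST hT) hyx

lemma trclSet_min {S T : Set ZFSet.{0}} (h1 : S ⊆ T) (h2 : TransClass T) : trclSet S ⊆ T :=
  fun _ hx => hx T h1 h2

lemma isRegular_lift {θ : Cardinal.{0}} (h : θ.IsRegular) : (Cardinal.lift.{1} θ).IsRegular := by
  constructor
  · simpa using h.1
  · rw [← Cardinal.lift_ord, ← Ordinal.lift_cof]
    exact Cardinal.lift_le.2 h.2

lemma mem_HSet_of_countable {θ : Cardinal.{0}} (hreg : θ.IsRegular)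
    (hθ : Cardinal.aleph0 < θ) {m : ZFSet.{0}}
    (h1 : m.toSet ⊆ HSet θ) (h2 : m.toSet.Countable) : m ∈ HSet θ := by
  have hregL := isRegular_lift hreg
  have hθL : Cardinal.aleph0 < Cardinal.lift.{1} θ := by simpa using hθ
  set T : Set ZFSet.{0} := m.toSet ∪ ⋃ z : m.toSet, trclSet (z : ZFSet.{0}).toSet with hT
  have hsub : m.toSet ⊆ T := Set.subset_union_left
  have htrans : TransClass T := by
    rintro x (hx | hx) y hyx
    · exact Or.inr (Set.mem_iUnion.2 ⟨⟨x, hx⟩, subset_trclSet _ hyx⟩)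
    · obtain ⟨z, hz⟩ := Set.mem_iUnion.1 hx
      exact Or.inr (Set.mem_iUnion.2 ⟨z, transClass_trclSet _ hz hyx⟩)
  have hmono : Cardinal.mk ↥(trclSet m.toSet) ≤ Cardinal.mk ↥T :=
    Cardinal.mk_le_mk_of_subset (trclSet_min hsub htrans)
  refine lt_of_le_of_lt hmono ?_
  have hcnt : Cardinal.mk ↥m.toSet ≤ Cardinal.aleph0 := h2.le_aleph0
  have hU : Cardinal.mk ↥(⋃ z : m.toSet, trclSet (z : ZFSet.{0}).toSet) < Cardinal.lift.{1} θ := by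
    refine lt_of_le_of_lt (Cardinal.mk_iUnion_le _) ?_
    refine Cardinal.mul_lt_of_lt hregL.1 (lt_of_le_of_lt hcnt hθL) ?_
    exact Cardinal.iSup_lt_of_isRegular hregL (lt_of_le_of_lt hcnt hθL) fun z => h1 z.2
  refine lt_of_le_of_lt (Cardinal.mk_union_le _ _) ?_
  exact Cardinal.add_lt_of_lt hregL.1 (lt_of_le_of_lt hcnt hθL) hU
lemma exists_U_superset {Hθ U : Set ZFSet.{0}} (hU : StatInCountable Hθ U)
    {S : Set ZFSet.{0}} (hS : S.Finite) (hSH : S ⊆ Hθ) {d : ZFSet.{0}} (hd : d ∈ S) :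
    ∃ M ∈ U, S ⊆ M.toSet := by
  classical
  set L : List ZFSet.{0} := hS.toFinset.toList with hL
  have hmemL : ∀ z, z ∈ L ↔ z ∈ S := by
    intro z; rw [hL, Finset.mem_toList, Set.Finite.mem_toFinset]
  have hgetD : ∀ n : ℕ, L.getD n d ∈ S := by
    intro n
    rcases lt_or_ge n L.length with h | h
    · rw [List.getD_eq_getElem L d h]; exact (hmemL _).1 (List.getElem_mem h)
    · rw [List.getD_eq_default L d h]; exact hd
  obtain ⟨M, hM, hcl⟩ := hU.2 (fun l => L.getD l.length d)
    (fun l _ => hSH (hgetD _))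
  refine ⟨M, hM, ?_⟩
  have h0 : L.getD 0 d ∈ M := by
    have := hcl [] (by simp)
    simpa using this
  have hn : ∀ n : ℕ, L.getD n d ∈ M := by
    intro n
    have := hcl (List.replicate n (L.getD 0 d)) (by
      intro z hz
      rw [List.eq_of_mem_replicate hz]; exact h0)
    simpa using this
  intro z hz
  obtain ⟨n, hlt, hzn⟩ := List.mem_iff_getElem.1 ((hmemL z).2 hz)
  have := hn n
  rwa [List.getD_eq_getElem L d hlt, hzn] at this

theorem ZFSet.mem_toSet (a u : ZFSet.{0}) : a ∈ u.toSet ↔ a ∈ u := Iff.rfl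

theorem ZFSet.toSet_empty : ZFSet.toSet (∅ : ZFSet.{0}) = ∅ := _root_.ZFSet.coe_empty

theorem ZFSet.toSet_insert (x y : ZFSet.{0}) : (insert x y).toSet = insert x y.toSet :=
  _root_.ZFSet.coe_insert x y

/-- for `θ > ω` regular, `U` stationary in `[H_θ]^ω` and `x ∈ H_θ`, the set
`D = {p ∈ Col_U : ∃ M ∈ M_p, x ∈ M}` is dense in `Col_U`. -/
theorem statement_16 (θ : Cardinal.{0}) (hreg : θ.IsRegular) (hθ : Cardinal.aleph0 < θ)
    (U : Set ZFSet.{0}) (hU : StatInCountable (HSet θ) U)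
    (x : ZFSet.{0}) (hx : x ∈ HSet θ) :
    ∀ p : ZFSet.{0}, IsCond θ U p →
      ∃ p' : ZFSet.{0}, IsCond θ U p' ∧ CondLe p' p ∧
        ∃ a b : ZFSet.{0}, p' = a.pair b ∧ ∃ m ∈ a.toSet, x ∈ m := by

  classical
  rintro p ⟨a, b, hpab, hafin, hactble, hUor, hchain, hfun, hdom, hvalb, hsubN⟩
  -- the value of d_p at m ∈ a
  have hy : ∀ m ∈ a, ∃ y : ZFSet.{0}, m.pair y ∈ b := fun m hm => (hdom m).2 hm
  set yval : ∀ m ∈ a, ZFSet.{0} := fun m hm => Classical.choose (hy m hm) with hyval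
  have hyspec : ∀ m (hm : m ∈ a), m.pair (yval m hm) ∈ b :=
    fun m hm => Classical.choose_spec (hy m hm)
  set S : Set ZFSet.{0} :=
    insert x (a.toSet ∪ ⋃ m : a.toSet, (yval m.1 ((ZFSet.mem_toSet _ _).1 m.2)).toSet)
    with hS
  have : Finite ↥a.toSet := hafin.to_subtype
  have hSfin : S.Finite := by
    refine Set.Finite.insert _ (hafin.union (Set.finite_iUnion fun m => ?_))
    exact (hvalb _ _ (hyspec m.1 ((ZFSet.mem_toSet _ _).1 m.2))).1
  have hSH : S ⊆ HSet θ := by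
    rintro z (rfl | (hz | hz))
    · exact hx
    · exact mem_HSet_of_countable hreg hθ (hactble z hz).1 (hactble z hz).2
    · obtain ⟨m, hm⟩ := Set.mem_iUnion.1 hz
      exact (hvalb _ _ (hyspec m.1 ((ZFSet.mem_toSet _ _).1 m.2))).2 hm
  obtain ⟨M, hMU, hSM⟩ := exists_U_superset hU hSfin hSH (Set.mem_insert x _)
  have hxM : x ∈ M := (ZFSet.mem_toSet _ _).1 (hSM (Set.mem_insert x _))
  have haM : ∀ m ∈ a, m ∈ M := fun m hm =>
    (ZFSet.mem_toSet _ _).1 (hSM (Or.inr (Or.inl hm)))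
  have hMa : M ∉ a := fun h => ZFSet.mem_irrefl M (haM M h)
  have hyM : ∀ m y : ZFSet.{0}, m.pair y ∈ b → y.toSet ⊆ M.toSet := by
    intro m y hmy
    have hm : m ∈ a := (hdom m).1 ⟨y, hmy⟩
    have : y = yval m hm := hfun.2 m y _ hmy (hyspec m hm)
    subst this
    intro z hz
    refine hSM (Or.inr (Or.inr (Set.mem_iUnion.2 ⟨⟨m, (ZFSet.mem_toSet _ _).2 hm⟩, hz⟩)))
  set a' : ZFSet.{0} := insert M a with ha'
  set b' : ZFSet.{0} := insert (M.pair ∅) b with hb'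
  have hmema' : ∀ z : ZFSet.{0}, z ∈ a' ↔ z = M ∨ z ∈ a := fun z => ZFSet.mem_insert_iff
  have hmemb' : ∀ z : ZFSet.{0}, z ∈ b' ↔ z = M.pair ∅ ∨ z ∈ b := fun z => ZFSet.mem_insert_iff
  -- pairs in b have first coordinate in a, hence ≠ M
  have hbfst : ∀ m y : ZFSet.{0}, m.pair y ∈ b → m ∈ a := fun m y hmy => (hdom m).1 ⟨y, hmy⟩
  refine ⟨a'.pair b', ⟨a', b', rfl, ?_, ?_, ?_, ?_, ?_, ?_, ?_, ?_⟩, ?_, a', b', rfl,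
    M, (ZFSet.mem_toSet _ _).2 ((hmema' M).2 (Or.inl rfl)), hxM⟩
  · -- finiteness
    rw [ha', ZFSet.toSet_insert]
    exact hafin.insert M
  · -- countable subsets of Hθ
    intro m hm
    rcases (hmema' m).1 ((ZFSet.mem_toSet _ _).1 hm) with rfl | hm'
    · exact hU.1 m hMU
    · exact hactble m hm'
  · -- condition (i)
    intro m hm
    rcases (hmema' m).1 ((ZFSet.mem_toSet _ _).1 hm) with rfl | hm'
    · exact Or.inl hMU
    · exact hUor m hm'
  · -- (ii) ∈-chain
    intro m hm m' hm'
    rcases (hmema' m).1 ((ZFSet.mem_toSet _ _).1 hm) with rfl | h1 <;>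
      rcases (hmema' m').1 ((ZFSet.mem_toSet _ _).1 hm') with h2 | h2
    · exact Or.inl h2.symm
    · exact Or.inr (Or.inr (haM m' h2))
    · exact h2 ▸ Or.inr (Or.inl (haM m h1))
    · exact hchain m h1 m' h2
  · -- IsZFun b'
    constructor
    · intro q hq
      rcases (hmemb' q).1 hq with rfl | hq'
      · exact ⟨M, ∅, rfl⟩
      · exact hfun.1 q hq'
    · intro a₀ b₀ c₀ h1 h2
      rcases (hmemb' _).1 h1 with h1' | h1' <;> rcases (hmemb' _).1 h2 with h2' | h2'
      · obtain ⟨-, rfl⟩ := ZFSet.pair_injective h1'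
        obtain ⟨-, rfl⟩ := ZFSet.pair_injective h2'
        rfl
      · obtain ⟨rfl, rfl⟩ := ZFSet.pair_injective h1'
        exact absurd (hbfst _ _ h2') hMa
      · obtain ⟨rfl, rfl⟩ := ZFSet.pair_injective h2'
        exact absurd (hbfst _ _ h1') hMa
      · exact hfun.2 a₀ b₀ c₀ h1' h2'
  · -- domain of b' is a'
    intro m
    constructor
    · rintro ⟨y, hy'⟩
      rcases (hmemb' _).1 hy' with h | h
      · exact (hmema' m).2 (Or.inl (ZFSet.pair_injective h).1)
      · exact (hmema' m).2 (Or.inr (hbfst _ _ h))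
    · intro hm
      rcases (hmema' m).1 hm with rfl | hm'
      · exact ⟨∅, (hmemb' _).2 (Or.inl rfl)⟩
      · exact ⟨yval m hm', (hmemb' _).2 (Or.inr (hyspec m hm'))⟩
  · -- values are finite subsets of Hθ
    intro m y hmy
    rcases (hmemb' _).1 hmy with h | h
    · obtain ⟨rfl, rfl⟩ := ZFSet.pair_injective h
      rw [ZFSet.toSet_empty]
      exact ⟨Set.finite_empty, Set.empty_subset _⟩
    · exact hvalb m y h
  · -- condition (iv)
    intro m m' y hm hm' hmm' hmy
    rcases (hmemb' _).1 hmy with h | h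
    · obtain ⟨rfl, rfl⟩ := ZFSet.pair_injective h
      rw [ZFSet.toSet_empty]
      exact Set.empty_subset _
    · rcases (hmema' m').1 hm' with rfl | h2
      · exact hyM m y h
      · have h1 : m ∈ a := hbfst _ _ h
        exact hsubN m m' y h1 h2 hmm' h
  · -- CondLe p' p
    refine ⟨a', b', a, b, rfl, hpab, ?_, ?_⟩
    · intro z hz
      exact (ZFSet.mem_toSet _ _).2 ((hmema' z).2 (Or.inr ((ZFSet.mem_toSet _ _).1 hz)))
    · intro m yq yp hm hq hp
      rcases (hmemb' _).1 hp with h | h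
      · obtain ⟨rfl, rfl⟩ := ZFSet.pair_injective h
        exact absurd hm hMa
      · rw [hfun.2 m yq yp hq h]


end NSF
end
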